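/- arXiv:math/0006013 — 5 statements merged into one kernel-verified Lean document; each statement's English description precedes it below -/
import Mathlib

section
/- Let L : ℝⁿ × ℝⁿ → [0,∞) be lower semicontinuous and such that L(x,·) is convex and finite-valued for every x. Then for every x ∈ ℝⁿ, every R > 0 and every ε > 0 there exists δ > 0 such that for all ξ with |ξ - x| ≤ δ and all u with |u| ≤ R one has L(ξ,u) ≥ L(x,u) − ε. -/
theorem stmt_2 {n : ℕ} (L : EuclideanSpace ℝ (Fin n) → EuclideanSpace ℝ (Fin n) → ℝ)
    (hL0 : ∀ x u, 0 ≤ L x u)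
    (hlsc : LowerSemicontinuous
      (fun p : EuclideanSpace ℝ (Fin n) × EuclideanSpace ℝ (Fin n) => L p.1 p.2))
    (hconv : ∀ x, ConvexOn ℝ Set.univ (L x)) :
    ∀ (x : EuclideanSpace ℝ (Fin n)) (R ε : ℝ), 0 < R → 0 < ε →
      ∃ δ > 0, ∀ (ξ u : EuclideanSpace ℝ (Fin n)),
        ‖ξ - x‖ ≤ δ → ‖u‖ ≤ R → L x u - ε ≤ L ξ u := by
  intro x R ε hR hε
  -- continuity of L x
  have hcont : Continuous (L x) := by
    have := (hconv x).continuousOn isOpen_univ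
    rw [← continuousOn_univ]; exact this
  -- g is lower semicontinuous
  set g : EuclideanSpace ℝ (Fin n) × EuclideanSpace ℝ (Fin n) → ℝ :=
    fun p => L p.1 p.2 + (-(L x p.2)) with hg
  have hglsc : LowerSemicontinuous g := by
    apply hlsc.add
    exact (Continuous.lowerSemicontinuous (by continuity))
  have hopen : IsOpen {p : EuclideanSpace ℝ (Fin n) × EuclideanSpace ℝ (Fin n) | -ε < g p} := by
    have := lowerSemicontinuous_iff_isOpen_preimage.mp hglsc (-ε)
    simpa [Set.preimage, Set.Ioi] using this
  set K : Set (EuclideanSpace ℝ (Fin n) × EuclideanSpace ℝ (Fin n)) :=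
    {x} ×ˢ Metric.closedBall 0 R with hKdef
  have hK : IsCompact K := isCompact_singleton.prod (isCompact_closedBall _ _)
  have hsub : K ⊆ {p | -ε < g p} := by
    rintro ⟨a, b⟩ ⟨ha, hb⟩
    simp only [Set.mem_singleton_iff] at ha
    subst ha
    simp only [Set.mem_setOf_eq, hg]
    linarith
  obtain ⟨δ, hδ, hthick⟩ := hK.exists_thickening_subset_open hopen hsub
  refine ⟨δ / 2, by linarith, fun ξ u hξ hu => ?_⟩
  have hmem : (ξ, u) ∈ Metric.thickening δ K := by
    rw [Metric.mem_thickening_iff]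
    refine ⟨(x, u), ⟨rfl, ?_⟩, ?_⟩
    · simpa [Metric.mem_closedBall, dist_eq_norm] using hu
    · rw [Prod.dist_eq]
      simp only [dist_self]
      have : dist ξ x ≤ δ / 2 := by rwa [dist_eq_norm]
      calc max (dist ξ x) 0 ≤ δ / 2 := by
            apply max_le this (by linarith)
        _ < δ := by linarith
  have := hthick hmem
  simp only [Set.mem_setOf_eq, hg] at this
  linarith
end

section
/- Let V be the value function of the Bolza problem. For every (t,x) ∈ dom(V) and every u ∈ ℝⁿ, the upper contingent derivative satisfies D↓V(t,x)(1,−u) ≤ L(x,u), provided L is continuous. Here D↓V(t,x)(w) = limsup_{h→0+, v→w} (V((t,x)+hv) − V(t,x))/h. -/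
open MeasureTheory Set Filter
open scoped ENNReal Topology

def Superlinear {n : ℕ} (Θ : EuclideanSpace ℝ (Fin n) → ℝ) : Prop :=
  ∀ M : ℝ, ∃ R : ℝ, ∀ u : EuclideanSpace ℝ (Fin n), R ≤ ‖u‖ → M * ‖u‖ ≤ Θ u

noncomputable def bolzaValue {n : ℕ}
    (L : EuclideanSpace ℝ (Fin n) → EuclideanSpace ℝ (Fin n) → ℝ)
    (φ : EuclideanSpace ℝ (Fin n) → ℝ≥0∞)
    (t : ℝ) (x : EuclideanSpace ℝ (Fin n)) : ℝ≥0∞ :=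
  ⨅ (y : ℝ → EuclideanSpace ℝ (Fin n)) (y' : ℝ → EuclideanSpace ℝ (Fin n))
    (_ : IntervalIntegrable y' volume 0 t)
    (_ : ∀ s ∈ Set.Icc (0:ℝ) t, y s = x + ∫ τ in (0:ℝ)..s, y' τ)
    (_ : IntervalIntegrable (fun s => L (y s) (y' s)) volume 0 t),
    ENNReal.ofReal (∫ s in (0:ℝ)..t, L (y s) (y' s)) + φ (y t)

/-- Upper contingent derivative `D↓W(p)(w) = limsup_{h→0+, v→w} (W(p+hv) - W(p))/h`. -/
noncomputable def upperContingentDeriv {α : Type*} [AddCommGroup α] [Module ℝ α]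
    [TopologicalSpace α] (W : α → EReal) (p : α) (w : α) : EReal :=
  limsup (fun q : ℝ × α => ((q.1⁻¹ : ℝ) : EReal) * (W (p + q.1 • q.2) - W p))
    ((𝓝[>] (0:ℝ)) ×ˢ 𝓝 w)

set_option maxHeartbeats 1000000 in
lemma bolza_compare {n : ℕ}
    (L : EuclideanSpace ℝ (Fin n) → EuclideanSpace ℝ (Fin n) → ℝ)
    (hL0 : ∀ x u, 0 ≤ L x u)
    (hLcont : Continuous
      (fun p : EuclideanSpace ℝ (Fin n) × EuclideanSpace ℝ (Fin n) => L p.1 p.2))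
    (φ : EuclideanSpace ℝ (Fin n) → ℝ≥0∞)
    (t : ℝ) (ht : 0 ≤ t) (x : EuclideanSpace ℝ (Fin n))
    (a : ℝ) (ha : 0 < a) (w : EuclideanSpace ℝ (Fin n)) :
    bolzaValue L φ (t + a) (x + a • w)
      ≤ ENNReal.ofReal (∫ σ in (0:ℝ)..a, L (x + a • w - σ • w) (-w))
        + bolzaValue L φ t x := by
  conv_rhs => rw [bolzaValue]
  rw [ENNReal.add_iInf]; refine le_iInf fun y => ?_
  rw [ENNReal.add_iInf]; refine le_iInf fun y' => ?_
  rw [ENNReal.add_iInf]; refine le_iInf fun hy' => ?_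
  rw [ENNReal.add_iInf]; refine le_iInf fun hy => ?_
  rw [ENNReal.add_iInf]; refine le_iInf fun hLi => ?_
  set Y' : ℝ → EuclideanSpace ℝ (Fin n) := fun σ => if σ ≤ a then -w else y' (σ - a) with hY'def
  set Y : ℝ → EuclideanSpace ℝ (Fin n) :=
    fun s => (x + a • w) + ∫ τ in (0:ℝ)..s, Y' τ with hYdef
  -- integrability of Y' on the two pieces
  have hY'1 : IntervalIntegrable Y' volume 0 a := by
    rw [intervalIntegrable_iff]
    refine ((integrableOn_const_iff (C := -w)).2 (Or.inr ?_)).congr_fun ?_ measurableSet_uIoc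
    · rw [Set.uIoc_of_le ha.le]; exact measure_Ioc_lt_top
    · intro τ hτ
      rw [Set.uIoc_of_le ha.le] at hτ
      simp only [Y', if_pos hτ.2]
  have hY'2 : IntervalIntegrable Y' volume a (t + a) := by
    have h2 := hy'.comp_sub_right a
    rw [zero_add] at h2
    rw [intervalIntegrable_iff] at h2 ⊢
    refine h2.congr_fun ?_ measurableSet_uIoc
    intro τ hτ
    rw [Set.uIoc_of_le (by linarith)] at hτ
    simp only [Y', if_neg (not_le.2 hτ.1)]
  have hY'int : IntervalIntegrable Y' volume 0 (t + a) := hY'1.trans hY'2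
  -- explicit values of Y
  have hint1 : ∀ s : ℝ, 0 ≤ s → s ≤ a → (∫ τ in (0:ℝ)..s, Y' τ) = -(s • w) := by
    intro s hs0 hsa
    rw [intervalIntegral.integral_congr (g := fun _ => -w)
      (fun τ hτ => by
        rw [Set.uIcc_of_le hs0] at hτ
        simp only [Y', if_pos (hτ.2.trans hsa)])]
    simp
  have hYval1 : ∀ s ∈ Set.Icc (0:ℝ) a, Y s = x + a • w - s • w := by
    intro s hs
    rw [hYdef]; simp only
    rw [hint1 s hs.1 hs.2, ← sub_eq_add_neg]
  have hYval2 : ∀ s ∈ Set.Icc a (t + a), Y s = y (s - a) := by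
    intro s hs
    have hsub : s - a ∈ Set.Icc (0:ℝ) t := ⟨by linarith [hs.1], by linarith [hs.2]⟩
    have hsplit : (∫ τ in (0:ℝ)..s, Y' τ)
        = (∫ τ in (0:ℝ)..a, Y' τ) + ∫ τ in a..s, Y' τ :=
      (intervalIntegral.integral_add_adjacent_intervals hY'1
        (hY'2.mono_set (Set.uIcc_subset_uIcc Set.left_mem_uIcc (by rw [Set.uIcc_of_le (by linarith [hs.1] : a ≤ t + a)]; exact hs)))).symm
    have h2 : (∫ τ in a..s, Y' τ) = ∫ τ in (0:ℝ)..(s - a), y' τ := by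
      rw [intervalIntegral.integral_congr_ae (g := fun τ => y' (τ - a))
        (Filter.Eventually.of_forall fun τ hτ => by
          rw [Set.uIoc_of_le hs.1] at hτ
          simp only [Y', if_neg (not_le.2 hτ.1)]),
        intervalIntegral.integral_comp_sub_right (fun τ => y' τ) a, sub_self]
    rw [hYdef]; simp only
    rw [hsplit, hint1 a ha.le le_rfl, h2, hy (s - a) hsub]
    abel
  -- integrability of the cost of Y on the two pieces
  have hcost1 : IntervalIntegrable (fun s => L (Y s) (Y' s)) volume 0 a := by
    have hg : Continuous (fun σ : ℝ => L (x + a • w - σ • w) (-w)) := by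
      exact hLcont.comp ((continuous_const.sub (continuous_id.smul continuous_const)).prodMk continuous_const)
    rw [intervalIntegrable_iff, Set.uIoc_of_le ha.le]
    refine (hg.intervalIntegrable 0 a).1.congr_fun ?_ measurableSet_Ioc
    intro σ hσ
    simp only [hYval1 σ ⟨hσ.1.le, hσ.2⟩, Y', if_pos hσ.2]
  have hcost2 : IntervalIntegrable (fun s => L (Y s) (Y' s)) volume a (t + a) := by
    have h2 := hLi.comp_sub_right a
    rw [zero_add] at h2
    rw [intervalIntegrable_iff] at h2 ⊢
    refine h2.congr_fun ?_ measurableSet_uIoc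
    intro σ hσ
    rw [Set.uIoc_of_le (by linarith)] at hσ
    simp only [hYval2 σ ⟨hσ.1.le, hσ.2⟩, Y', if_neg (not_le.2 hσ.1)]
  have hcostint : IntervalIntegrable (fun s => L (Y s) (Y' s)) volume 0 (t + a) :=
    hcost1.trans hcost2
  -- value of the cost
  have hval : (∫ s in (0:ℝ)..(t + a), L (Y s) (Y' s))
      = (∫ σ in (0:ℝ)..a, L (x + a • w - σ • w) (-w)) + ∫ s in (0:ℝ)..t, L (y s) (y' s) := by
    rw [← intervalIntegral.integral_add_adjacent_intervals hcost1 hcost2]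
    congr 1
    · refine intervalIntegral.integral_congr_ae (Filter.Eventually.of_forall fun σ hσ => ?_)
      rw [Set.uIoc_of_le ha.le] at hσ
      simp only [hYval1 σ ⟨hσ.1.le, hσ.2⟩, Y', if_pos hσ.2]
    · rw [intervalIntegral.integral_congr_ae
        (g := fun s => L (y (s - a)) (y' (s - a)))
        (Filter.Eventually.of_forall fun σ hσ => by
          rw [Set.uIoc_of_le (by linarith : a ≤ t + a)] at hσ
          simp only [hYval2 σ ⟨hσ.1.le, hσ.2⟩, Y', if_neg (not_le.2 hσ.1)]),
        intervalIntegral.integral_comp_sub_right (fun s => L (y s) (y' s)) a, sub_self,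
        add_sub_cancel_right]
  have hYend : Y (t + a) = y t := by
    rw [hYval2 (t + a) ⟨by linarith, le_rfl⟩, add_sub_cancel_right]
  -- assemble
  rw [bolzaValue]
  refine iInf_le_of_le Y (iInf_le_of_le Y' (iInf_le_of_le hY'int
    (iInf_le_of_le (fun s _ => rfl) (iInf_le_of_le hcostint (le_of_eq ?_)))))
  rw [hval, hYend, ENNReal.ofReal_add
    (intervalIntegral.integral_nonneg ha.le fun σ _ => hL0 _ _)
    (intervalIntegral.integral_nonneg ht fun s _ => hL0 _ _), add_assoc]

set_option maxHeartbeats 1000000 in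
theorem stmt_9 {n : ℕ}
    (L : EuclideanSpace ℝ (Fin n) → EuclideanSpace ℝ (Fin n) → ℝ)
    (hL0 : ∀ x u, 0 ≤ L x u)
    (hLcont : Continuous
      (fun p : EuclideanSpace ℝ (Fin n) × EuclideanSpace ℝ (Fin n) => L p.1 p.2))
    (hLconv : ∀ x, ConvexOn ℝ Set.univ (L x))
    (Θ : EuclideanSpace ℝ (Fin n) → ℝ) (hΘ0 : ∀ u, 0 ≤ Θ u)
    (hΘconv : ConvexOn ℝ Set.univ Θ) (hΘsuper : Superlinear Θ)
    (hcoerc : ∀ x u, Θ u ≤ L x u)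
    (φ : EuclideanSpace ℝ (Fin n) → ℝ≥0∞)
    (hφlsc : LowerSemicontinuous φ) (hφ : ∃ x, φ x ≠ ⊤)
    (t : ℝ) (ht : 0 ≤ t) (x : EuclideanSpace ℝ (Fin n))
    (hdom : bolzaValue L φ t x ≠ ⊤) (u : EuclideanSpace ℝ (Fin n)) :
    upperContingentDeriv
        (fun p : ℝ × EuclideanSpace ℝ (Fin n) => ((bolzaValue L φ p.1 p.2 : ℝ≥0∞) : EReal))
        (t, x) (1, -u)
      ≤ ((L x u : ℝ) : EReal) := by
  rw [upperContingentDeriv, ← EReal.le_of_forall_lt_iff_le]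
  intro c hc
  rw [EReal.coe_lt_coe_iff] at hc
  set r : ℝ := (L x u + c) / 2 with hrdef
  have hLr : L x u < r := by rw [hrdef]; linarith
  have hrc : r < c := by rw [hrdef]; linarith
  have hr0 : 0 < r := lt_of_le_of_lt (hL0 x u) hLr
  have hev : ∀ᶠ q in 𝓝 ((x, u) : EuclideanSpace ℝ (Fin n) × EuclideanSpace ℝ (Fin n)),
      L q.1 q.2 < r :=
    Filter.Tendsto.eventually_lt_const hLr (hLcont.continuousAt (x := (x, u)))
  obtain ⟨δ, hδ0, hδ⟩ := Metric.eventually_nhds_iff.mp hev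
  -- eventual conditions on v
  have hv1 : ∀ᶠ v : ℝ × EuclideanSpace ℝ (Fin n) in 𝓝 ((1:ℝ), -u),
      ‖v.1⁻¹ • v.2 + u‖ < δ := by
    have hco : ContinuousAt (fun v : ℝ × EuclideanSpace ℝ (Fin n) => ‖v.1⁻¹ • v.2 + u‖)
        ((1:ℝ), -u) :=
      (((continuousAt_fst.inv₀ one_ne_zero).smul continuousAt_snd).add continuousAt_const).norm
    refine Filter.Tendsto.eventually_lt_const ?_ hco
    simp [hδ0]
  have hv2 : ∀ᶠ v : ℝ × EuclideanSpace ℝ (Fin n) in 𝓝 ((1:ℝ), -u), ‖v.2‖ < ‖u‖ + 1 := by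
    refine Filter.Tendsto.eventually_lt_const ?_ continuousAt_snd.norm
    simpa using lt_add_one ‖u‖
  have hv3 : ∀ᶠ v : ℝ × EuclideanSpace ℝ (Fin n) in 𝓝 ((1:ℝ), -u),
      0 < v.1 ∧ v.1 < c / r := by
    have h1 : (1:ℝ) < c / r := (one_lt_div hr0).2 hrc
    have hfst : ContinuousAt Prod.fst ((1:ℝ), -u) := continuousAt_fst
    exact (Filter.Tendsto.eventually_const_lt (show (0:ℝ) < 1 by norm_num) hfst).and
      (Filter.Tendsto.eventually_lt_const h1 hfst)
  have hhev : ∀ᶠ h in 𝓝[>] (0:ℝ), h < δ / (‖u‖ + 1) := by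
    have hd : 0 < δ / (‖u‖ + 1) := div_pos hδ0 (by positivity)
    exact Filter.Eventually.filter_mono nhdsWithin_le_nhds (Iio_mem_nhds hd)
  have hpos : ∀ᶠ h : ℝ in 𝓝[>] (0:ℝ), h ∈ Set.Ioi (0:ℝ) := eventually_mem_nhdsWithin
  have hev2 := ((hpos.and hhev).prod_mk (hv1.and (hv2.and hv3)) :
      ∀ᶠ q : ℝ × (ℝ × EuclideanSpace ℝ (Fin n)) in (𝓝[>] (0:ℝ)) ×ˢ 𝓝 ((1:ℝ), -u),
        (q.1 ∈ Set.Ioi (0:ℝ) ∧ q.1 < δ / (‖u‖ + 1)) ∧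
        (‖q.2.1⁻¹ • q.2.2 + u‖ < δ ∧ (‖q.2.2‖ < ‖u‖ + 1 ∧ (0 < q.2.1 ∧ q.2.1 < c / r))))
  refine limsup_le_of_le (by isBoundedDefault) ?_
  filter_upwards [hev2] with q hq
  obtain ⟨⟨hq0, hqδ⟩, hw1, hw2, hq2pos, hq2lt⟩ := hq
  rw [Set.mem_Ioi] at hq0
  set a : ℝ := q.1 * q.2.1 with hadef
  have ha : 0 < a := mul_pos hq0 hq2pos
  set w : EuclideanSpace ℝ (Fin n) := q.2.1⁻¹ • q.2.2 with hwdef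
  have haw : a • w = q.1 • q.2.2 := by
    rw [hadef, hwdef, smul_smul, mul_assoc, mul_inv_cancel₀ (ne_of_gt hq2pos), mul_one]
  have hkey := bolza_compare L hL0 hLcont φ t ht x a ha w
  have hseg_nonneg : 0 ≤ ∫ σ in (0:ℝ)..a, L (x + a • w - σ • w) (-w) :=
    intervalIntegral.integral_nonneg ha.le fun σ _ => hL0 _ _
  -- bound the segment cost
  have hnrm : a * ‖w‖ < δ := by
    have h1 : a * ‖w‖ = q.1 * ‖q.2.2‖ := by
      rw [hwdef, norm_smul, hadef, norm_inv, Real.norm_eq_abs, abs_of_pos hq2pos]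
      field_simp
    have h2 : q.1 * (‖u‖ + 1) < δ := (lt_div_iff₀ (by positivity)).1 hqδ
    nlinarith [norm_nonneg q.2.2]
  have hb : ∀ σ ∈ Set.Icc (0:ℝ) a, L (x + a • w - σ • w) (-w) ≤ r := by
    intro σ hσ
    refine le_of_lt (hδ (y := (x + a • w - σ • w, -w)) ?_)
    rw [Prod.dist_eq, max_lt_iff]
    constructor
    · rw [dist_eq_norm]
      have he : x + a • w - σ • w - x = (a - σ) • w := by rw [sub_smul]; abel
      rw [he, norm_smul, Real.norm_eq_abs]
      calc |a - σ| * ‖w‖ ≤ a * ‖w‖ := by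
            apply mul_le_mul_of_nonneg_right _ (norm_nonneg _)
            rw [abs_of_nonneg (by linarith [hσ.2])]; linarith [hσ.1]
        _ < δ := hnrm
    · rw [dist_eq_norm]
      have he : -w - u = -(w + u) := by abel
      rw [he, norm_neg]
      rw [hwdef]
      exact hw1
  have hgint : IntervalIntegrable (fun σ => L (x + a • w - σ • w) (-w)) volume 0 a :=
    (hLcont.comp ((continuous_const.sub
      (continuous_id.smul continuous_const)).prodMk continuous_const)).intervalIntegrable 0 a
  have hseg_le : (∫ σ in (0:ℝ)..a, L (x + a • w - σ • w) (-w)) ≤ a * r := by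
    calc (∫ σ in (0:ℝ)..a, L (x + a • w - σ • w) (-w))
        ≤ ∫ _ in (0:ℝ)..a, r := intervalIntegral.integral_mono_on ha.le hgint
          intervalIntegrable_const hb
      _ = a * r := by rw [intervalIntegral.integral_const, smul_eq_mul, sub_zero]
  -- finiteness and real comparison
  have hRfin : ENNReal.ofReal (∫ σ in (0:ℝ)..a, L (x + a • w - σ • w) (-w))
      + bolzaValue L φ t x ≠ ⊤ := ENNReal.add_ne_top.2 ⟨ENNReal.ofReal_ne_top, hdom⟩
  have hfin : bolzaValue L φ (t + a) (x + a • w) ≠ ⊤ := ne_top_of_le_ne_top hRfin hkey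
  set A : ℝ := (bolzaValue L φ (t + a) (x + a • w)).toReal with hAdef
  set B : ℝ := (bolzaValue L φ t x).toReal with hBdef
  have hAB : A - B ≤ a * r := by
    have h1 := ENNReal.toReal_mono hRfin hkey
    rw [ENNReal.toReal_add ENNReal.ofReal_ne_top hdom,
      ENNReal.toReal_ofReal hseg_nonneg] at h1
    have := hseg_le
    rw [hAdef, hBdef]
    linarith
  -- rewrite the point
  have hpt : ((t, x) : ℝ × EuclideanSpace ℝ (Fin n)) + q.1 • q.2 = (t + a, x + a • w) := by
    refine Prod.ext ?_ ?_
    · simp [hadef, smul_eq_mul]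
    · simp [haw]
  simp only [hpt]
  have e1 : ((bolzaValue L φ (t + a) (x + a • w) : ℝ≥0∞) : EReal) = ((A : ℝ) : EReal) := by
    conv_lhs => rw [← ENNReal.ofReal_toReal hfin]
    rw [EReal.coe_ennreal_ofReal, max_eq_left ENNReal.toReal_nonneg]
  have e2 : ((bolzaValue L φ t x : ℝ≥0∞) : EReal) = ((B : ℝ) : EReal) := by
    conv_lhs => rw [← ENNReal.ofReal_toReal hdom]
    rw [EReal.coe_ennreal_ofReal, max_eq_left ENNReal.toReal_nonneg]
  rw [e1, e2, ← EReal.coe_sub, ← EReal.coe_mul, EReal.coe_le_coe_iff]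
  calc q.1⁻¹ * (A - B) ≤ q.1⁻¹ * (a * r) :=
        mul_le_mul_of_nonneg_left hAB (inv_nonneg.2 hq0.le)
    _ = q.2.1 * r := by
        rw [hadef]; field_simp
    _ ≤ c := ((lt_div_iff₀ hr0).1 hq2lt).le
end

section
/- Assume L : ℝⁿ×ℝⁿ → [0,∞) is lower semicontinuous, convex in u, coercive, and locally bounded. Then L⁺(x,u) ≥ L(x,u) for all (x,u), where L⁺(x,u) = limsup_{h→0+} (1/h) inf{ ∫_{−h}^{0} L(y(s), y'(s)) ds : y(−h) = x − hu, y(0) = x }. -/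
open MeasureTheory Set Filter
open scoped ENNReal Topology

def LocallyBounded {n : ℕ}
    (L : EuclideanSpace ℝ (Fin n) → EuclideanSpace ℝ (Fin n) → ℝ) : Prop :=
  ∀ x₀ : EuclideanSpace ℝ (Fin n), ∃ M r : ℝ, 0 < r ∧
    ∀ x u, ‖x - x₀‖ ≤ r → ‖u‖ ≤ r → L x u ≤ M

/-- Infimum of `∫_{-h}^0 L(y,y')` over absolutely continuous arcs `y` on `[-h,0]`
with `y(-h) = x - h•u` and `y(0) = x`. -/
noncomputable def arcInf {n : ℕ}
    (L : EuclideanSpace ℝ (Fin n) → EuclideanSpace ℝ (Fin n) → ℝ)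
    (x u : EuclideanSpace ℝ (Fin n)) (h : ℝ) : ℝ≥0∞ :=
  ⨅ (y : ℝ → EuclideanSpace ℝ (Fin n)) (y' : ℝ → EuclideanSpace ℝ (Fin n))
    (_ : IntervalIntegrable y' volume (-h) 0)
    (_ : ∀ s ∈ Set.Icc (-h) (0:ℝ), y s = (x - h • u) + ∫ τ in (-h)..s, y' τ)
    (_ : y 0 = x)
    (_ : IntervalIntegrable (fun s => L (y s) (y' s)) volume (-h) 0),
    ENNReal.ofReal (∫ s in (-h)..(0:ℝ), L (y s) (y' s))

/-- `L⁺(x,u) = limsup_{h→0+} (1/h) inf{∫_{-h}^0 L(y,y') : y(-h)=x-hu, y(0)=x}`. -/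
noncomputable def LPlus {n : ℕ}
    (L : EuclideanSpace ℝ (Fin n) → EuclideanSpace ℝ (Fin n) → ℝ)
    (x u : EuclideanSpace ℝ (Fin n)) : ℝ≥0∞ :=
  limsup (fun h : ℝ => arcInf L x u h / ENNReal.ofReal h) (𝓝[>] (0:ℝ))

set_option maxHeartbeats 1000000 in
lemma exists_minorant {n : ℕ} (L : EuclideanSpace ℝ (Fin n) → EuclideanSpace ℝ (Fin n) → ℝ)
    (hLlsc : LowerSemicontinuous
      (fun p : EuclideanSpace ℝ (Fin n) × EuclideanSpace ℝ (Fin n) => L p.1 p.2))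
    (hLconv : ∀ x, ConvexOn ℝ Set.univ (L x))
    (Θ : EuclideanSpace ℝ (Fin n) → ℝ) (hΘsuper : Superlinear Θ)
    (hcoerc : ∀ x u, Θ u ≤ L x u)
    (x u : EuclideanSpace ℝ (Fin n)) (c : ℝ) (hc : c < L x u) :
    ∃ (φ : EuclideanSpace ℝ (Fin n) →L[ℝ] ℝ) (b δ : ℝ), 0 < δ ∧ c ≤ φ u + b ∧
      ∀ x' v, ‖x' - x‖ ≤ δ → φ v + b ≤ L x' v := by
  classical
  have hx_lsc : LowerSemicontinuous (fun v : EuclideanSpace ℝ (Fin n) => L x v) := by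
    have h := hLlsc.comp (Continuous.prodMk_right x)
    exact h
  have hfst_lsc : LowerSemicontinuous
      (fun p : EuclideanSpace ℝ (Fin n) × ℝ => L x p.1) := by
    have h := hx_lsc.comp
      (continuous_fst : Continuous (Prod.fst : EuclideanSpace ℝ (Fin n) × ℝ → _))
    exact h
  have hSclosed : IsClosed {p : EuclideanSpace ℝ (Fin n) × ℝ | L x p.1 ≤ p.2} := by
    rw [← isOpen_compl_iff]
    have hgl : LowerSemicontinuous (fun p : EuclideanSpace ℝ (Fin n) × ℝ => L x p.1 + (-p.2)) :=
      hfst_lsc.add (Continuous.lowerSemicontinuous (by fun_prop))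
    have hcompl : {p : EuclideanSpace ℝ (Fin n) × ℝ | L x p.1 ≤ p.2}ᶜ
        = (fun p : EuclideanSpace ℝ (Fin n) × ℝ => L x p.1 + (-p.2)) ⁻¹' (Set.Ioi 0) := by
      ext p
      simp only [Set.mem_compl_iff, Set.mem_setOf_eq, not_le, Set.mem_preimage, Set.mem_Ioi]
      constructor <;> intro <;> linarith
    rw [hcompl]
    exact hgl.isOpen_preimage _
  have hSconv : Convex ℝ {p : EuclideanSpace ℝ (Fin n) × ℝ | L x p.1 ≤ p.2} := by
    have h := (hLconv x).convex_epigraph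
    simpa using h
  set η : ℝ := (L x u - c) / 2 with hηdef
  have hη : 0 < η := by rw [hηdef]; linarith
  have hcη : c + η < L x u := by rw [hηdef]; linarith
  have hq : ((u, c + η) : EuclideanSpace ℝ (Fin n) × ℝ)
      ∉ {p : EuclideanSpace ℝ (Fin n) × ℝ | L x p.1 ≤ p.2} := by
    simp only [Set.mem_setOf_eq]; push_neg; exact hcη
  obtain ⟨f, α, hfq, hfS⟩ := geometric_hahn_banach_point_closed hSconv hSclosed hq
  set g : EuclideanSpace ℝ (Fin n) →L[ℝ] ℝ :=
    f.comp (ContinuousLinearMap.inl ℝ (EuclideanSpace ℝ (Fin n)) ℝ) with hgdef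
  set β : ℝ := f (0, 1) with hβdef
  have hsplit : ∀ (v : EuclideanSpace ℝ (Fin n)) (t : ℝ), f (v, t) = g v + t * β := by
    intro v t
    have h1 : ((v, t) : EuclideanSpace ℝ (Fin n) × ℝ) = (v, (0:ℝ)) + t • ((0 : _), (1:ℝ)) := by
      simp [Prod.ext_iff]
    rw [h1, map_add, f.map_smul, smul_eq_mul]
    simp [hgdef, hβdef]
  have hmemLe : ∀ v : EuclideanSpace ℝ (Fin n),
      ((v, L x v) : EuclideanSpace ℝ (Fin n) × ℝ)
        ∈ {p : EuclideanSpace ℝ (Fin n) × ℝ | L x p.1 ≤ p.2} := by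
    intro v
    simp only [Set.mem_setOf_eq]
    exact le_refl _
  have h1 : α < g u + L x u * β := by
    have := hfS _ (hmemLe u); rwa [hsplit] at this
  have h2 : g u + (c + η) * β < α := by
    have := hfq; rwa [hsplit] at this
  have hβ : 0 < β := by
    by_contra hβ'
    push_neg at hβ'
    nlinarith [mul_le_mul_of_nonpos_right (le_of_lt hcη) hβ']
  set φ₀ : EuclideanSpace ℝ (Fin n) →L[ℝ] ℝ := (-β⁻¹) • g with hφ₀def
  have hφ₀app : ∀ v, φ₀ v = -β⁻¹ * g v := fun v => rfl
  have hmin0 : ∀ v, φ₀ v + α / β ≤ L x v := by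
    intro v
    have h3 : α < g v + L x v * β := by
      have := hfS _ (hmemLe v); rwa [hsplit] at this
    have h4 : (α - g v) / β < L x v := (div_lt_iff₀ hβ).mpr (by linarith)
    have h5 : φ₀ v + α / β = (α - g v) / β := by
      rw [hφ₀app]; field_simp; ring
    linarith
  have hu0 : c + η < φ₀ u + α / β := by
    have h5 : φ₀ u + α / β = (α - g u) / β := by
      rw [hφ₀app]; field_simp; ring
    rw [h5]
    exact (lt_div_iff₀ hβ).mpr (by linarith)
  obtain ⟨R, hR⟩ := hΘsuper (‖φ₀‖ + 1)
  set R₁ : ℝ := max R (max (α / β) 0) with hR₁def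
  have hR₁0 : 0 ≤ R₁ := le_trans (le_max_right _ _) (le_max_right _ _)
  have hout : ∀ (x' v : EuclideanSpace ℝ (Fin n)), R₁ ≤ ‖v‖ → φ₀ v + α / β ≤ L x' v := by
    intro x' v hv
    have h4 : φ₀ v ≤ ‖φ₀‖ * ‖v‖ :=
      calc φ₀ v ≤ |φ₀ v| := le_abs_self _
        _ = ‖φ₀ v‖ := (Real.norm_eq_abs _).symm
        _ ≤ ‖φ₀‖ * ‖v‖ := φ₀.le_opNorm v
    have h5 : (‖φ₀‖ + 1) * ‖v‖ ≤ Θ v := hR v (le_trans (le_max_left _ _) hv)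
    have h6 : α / β ≤ ‖v‖ := le_trans (le_trans (le_max_left _ _) (le_max_right R _)) hv
    have h7 : Θ v ≤ L x' v := hcoerc x' v
    nlinarith
  set U : Set (EuclideanSpace ℝ (Fin n) × EuclideanSpace ℝ (Fin n)) :=
    {q | φ₀ q.2 + (α / β - η) < L q.1 q.2} with hUdef
  have hUopen : IsOpen U := by
    have hlsc2 : LowerSemicontinuous
        (fun q : EuclideanSpace ℝ (Fin n) × EuclideanSpace ℝ (Fin n) =>
          L q.1 q.2 + (-(φ₀ q.2))) :=
      hLlsc.add (Continuous.lowerSemicontinuous (by fun_prop))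
    have hU2 : U = (fun q : EuclideanSpace ℝ (Fin n) × EuclideanSpace ℝ (Fin n) =>
        L q.1 q.2 + (-(φ₀ q.2))) ⁻¹' (Set.Ioi (α / β - η)) := by
      ext q
      simp only [hUdef, Set.mem_setOf_eq, Set.mem_preimage, Set.mem_Ioi]
      constructor <;> intro <;> linarith
    rw [hU2]
    exact hlsc2.isOpen_preimage _
  have hsub : ({x} : Set (EuclideanSpace ℝ (Fin n))) ×ˢ
      (Metric.closedBall (0 : EuclideanSpace ℝ (Fin n)) R₁) ⊆ U := by
    rintro ⟨x₁, v⟩ ⟨hx₁, -⟩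
    simp only [Set.mem_singleton_iff] at hx₁
    subst hx₁
    have := hmin0 v
    simp only [hUdef, Set.mem_setOf_eq]
    linarith
  obtain ⟨W1, W2, hW1o, -, hxW1, hKW2, hWU⟩ :=
    generalized_tube_lemma isCompact_singleton
      (isCompact_closedBall (0 : EuclideanSpace ℝ (Fin n)) R₁) hUopen hsub
  obtain ⟨ε, hε, hball⟩ := Metric.isOpen_iff.1 hW1o x (hxW1 rfl)
  refine ⟨φ₀, α / β - η, ε / 2, by linarith, by linarith, ?_⟩
  intro x' v hx'
  by_cases hv : ‖v‖ ≤ R₁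
  · have hmem : ((x', v) : EuclideanSpace ℝ (Fin n) × EuclideanSpace ℝ (Fin n)) ∈ U := by
      apply hWU
      constructor
      · apply hball
        rw [Metric.mem_ball, dist_eq_norm]
        linarith
      · apply hKW2
        simpa [Metric.mem_closedBall, dist_eq_norm] using hv
    exact le_of_lt hmem
  · push_neg at hv
    have := hout x' v (le_of_lt hv)
    linarith

set_option maxHeartbeats 1000000 in
theorem stmt_13 {n : ℕ}
    (L : EuclideanSpace ℝ (Fin n) → EuclideanSpace ℝ (Fin n) → ℝ)
    (hL0 : ∀ x u, 0 ≤ L x u)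
    (hLlsc : LowerSemicontinuous
      (fun p : EuclideanSpace ℝ (Fin n) × EuclideanSpace ℝ (Fin n) => L p.1 p.2))
    (hLconv : ∀ x, ConvexOn ℝ Set.univ (L x))
    (Θ : EuclideanSpace ℝ (Fin n) → ℝ) (hΘ0 : ∀ u, 0 ≤ Θ u)
    (hΘconv : ConvexOn ℝ Set.univ Θ) (hΘsuper : Superlinear Θ)
    (hcoerc : ∀ x u, Θ u ≤ L x u)
    (hLbd : LocallyBounded L) :
    ∀ x u : EuclideanSpace ℝ (Fin n), ENNReal.ofReal (L x u) ≤ LPlus L x u := by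
  intro x u
  have key : ∀ c : ℝ, 0 ≤ c → c < L x u → ENNReal.ofReal c ≤ LPlus L x u := by
    intro c hc0 hc
    obtain ⟨φ, b, δ, hδ, hcu, hmin⟩ := exists_minorant L hLlsc hLconv Θ hΘsuper hcoerc x u c hc
    obtain ⟨R, hR⟩ := hΘsuper 1
    set R₁ : ℝ := max R 0 with hR₁def
    have hR₁0 : 0 ≤ R₁ := le_max_right _ _
    -- pointwise bound ‖v‖ ≤ R₁ + L x' v
    have hpt : ∀ (x' v : EuclideanSpace ℝ (Fin n)), ‖v‖ ≤ R₁ + L x' v := by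
      intro x' v
      by_cases h' : ‖v‖ ≤ R₁
      · have := hL0 x' v; linarith
      · push_neg at h'
        have h1 : 1 * ‖v‖ ≤ Θ v := hR v (le_of_lt (lt_of_le_of_lt (le_max_left R 0) h'))
        have h2 : Θ v ≤ L x' v := hcoerc x' v
        linarith
    have hD : (0:ℝ) < R₁ + c + 1 := by linarith
    set δ' : ℝ := δ / (R₁ + c + 1) with hδ'def
    have hδ'0 : 0 < δ' := div_pos hδ hD
    have hev : ∀ᶠ h in 𝓝[>] (0:ℝ),
        ENNReal.ofReal c ≤ arcInf L x u h / ENNReal.ofReal h := by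
      filter_upwards [Ioo_mem_nhdsGT_of_mem (Set.left_mem_Ico.mpr hδ'0)] with h hh
      obtain ⟨hh0, hhδ⟩ := hh
      have hhne : ENNReal.ofReal h ≠ 0 := by
        simp [ENNReal.ofReal_eq_zero, not_le, hh0]
      rw [ENNReal.le_div_iff_mul_le (Or.inl hhne) (Or.inl ENNReal.ofReal_ne_top),
        ← ENNReal.ofReal_mul hc0]
      rw [arcInf]
      refine le_iInf fun y => le_iInf fun y' => le_iInf fun hy' => le_iInf fun hy =>
        le_iInf fun hy0 => le_iInf fun hint => ENNReal.ofReal_le_ofReal ?_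
      -- now prove c * h ≤ ∫ s in (-h)..0, L (y s) (y' s)
      have hh0' : -h ≤ (0:ℝ) := by linarith
      set I : ℝ := ∫ s in (-h)..(0:ℝ), L (y s) (y' s) with hIdef
      by_cases hIc : c * h ≤ I
      · exact hIc
      push_neg at hIc
      -- total displacement
      have h1 := hy 0 ⟨hh0', le_refl 0⟩
      rw [hy0] at h1
      have hJ : (∫ τ in (-h)..(0:ℝ), y' τ) = h • u := by
        rw [← sub_sub_cancel x (h • u), eq_sub_iff_add_eq, add_comm]
        exact h1.symm
      -- bound on ∫ ‖y'‖
      have hnormint : IntervalIntegrable (fun s => ‖y' s‖) volume (-h) 0 := hy'.norm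
      have hN : (∫ s in (-h)..(0:ℝ), ‖y' s‖) ≤ h * R₁ + I := by
        have hg : IntervalIntegrable (fun s => R₁ + L (y s) (y' s)) volume (-h) 0 :=
          (intervalIntegrable_const (c := R₁)).add hint
        have hmono := intervalIntegral.integral_mono_on hh0' hnormint hg
          (fun s _ => hpt (y s) (y' s))
        rwa [intervalIntegral.integral_add (intervalIntegrable_const (c := R₁)) hint,
          intervalIntegral.integral_const, smul_eq_mul, zero_sub, neg_neg] at hmono
      have hIlt : (∫ s in (-h)..(0:ℝ), ‖y' s‖) ≤ h * (R₁ + c) := by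
        nlinarith
      have hhD : h * (R₁ + c + 1) ≤ δ := by
        rw [hδ'def] at hhδ
        calc h * (R₁ + c + 1) ≤ δ' * (R₁ + c + 1) := by nlinarith
          _ = δ := by rw [hδ'def]; field_simp
      -- arcs stay near x
      have hclose : ∀ s ∈ Set.Icc (-h) (0:ℝ), ‖y s - x‖ ≤ δ := by
        intro s hs
        have hs1 : -h ≤ s := hs.1
        have hs2 : s ≤ (0:ℝ) := hs.2
        have hsubL : Set.uIcc (-h) s ⊆ Set.uIcc (-h) (0:ℝ) := by
          rw [Set.uIcc_of_le hs1, Set.uIcc_of_le hh0']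
          exact Set.Icc_subset_Icc le_rfl hs2
        have hsubR : Set.uIcc s (0:ℝ) ⊆ Set.uIcc (-h) (0:ℝ) := by
          rw [Set.uIcc_of_le hs2, Set.uIcc_of_le hh0']
          exact Set.Icc_subset_Icc hs1 le_rfl
        have hadd : (∫ τ in (-h)..s, y' τ) + (∫ τ in s..(0:ℝ), y' τ)
            = ∫ τ in (-h)..(0:ℝ), y' τ :=
          intervalIntegral.integral_add_adjacent_intervals
            (hy'.mono_set hsubL) (hy'.mono_set hsubR)
        have hys := hy s hs
        have hdiff : y s - x = -(∫ τ in s..(0:ℝ), y' τ) := by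
          rw [hys, ← hJ, ← hadd]
          abel
        have haddn : (∫ τ in (-h)..s, ‖y' τ‖) + (∫ τ in s..(0:ℝ), ‖y' τ‖)
            = ∫ τ in (-h)..(0:ℝ), ‖y' τ‖ :=
          intervalIntegral.integral_add_adjacent_intervals
            (hnormint.mono_set hsubL) (hnormint.mono_set hsubR)
        have hn1 : (0:ℝ) ≤ ∫ τ in (-h)..s, ‖y' τ‖ :=
          intervalIntegral.integral_nonneg hs1 (fun τ _ => norm_nonneg _)
        have hn2 : ‖∫ τ in s..(0:ℝ), y' τ‖ ≤ ∫ τ in s..(0:ℝ), ‖y' τ‖ :=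
          intervalIntegral.norm_integral_le_integral_norm hs2
        rw [hdiff, norm_neg]
        calc ‖∫ τ in s..(0:ℝ), y' τ‖ ≤ ∫ τ in s..(0:ℝ), ‖y' τ‖ := hn2
          _ ≤ ∫ τ in (-h)..(0:ℝ), ‖y' τ‖ := by linarith
          _ ≤ h * (R₁ + c) := hIlt
          _ ≤ δ := by nlinarith
      -- integrate the affine minorant
      have hφint : IntervalIntegrable (fun s => φ (y' s)) volume (-h) 0 :=
        ⟨φ.integrable_comp hy'.1, φ.integrable_comp hy'.2⟩
      have hpt2 : ∀ s ∈ Set.Icc (-h) (0:ℝ), φ (y' s) + b ≤ L (y s) (y' s) :=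
        fun s hs => hmin (y s) (y' s) (hclose s hs)
      have hmono2 := intervalIntegral.integral_mono_on hh0'
        (hφint.add (intervalIntegrable_const (c := b))) hint hpt2
      rw [intervalIntegral.integral_add hφint (intervalIntegrable_const (c := b)),
        intervalIntegral.integral_const, smul_eq_mul, zero_sub, neg_neg,
        φ.intervalIntegral_comp_comm hy', hJ, φ.map_smul, smul_eq_mul] at hmono2
      -- h * φ u + h * b ≤ I, and c ≤ φ u + b
      nlinarith
    exact le_limsup_of_frequently_le' hev.frequently
  -- conclude
  by_contra hcon
  push_neg at hcon
  obtain ⟨m, hm1, hm2⟩ := exists_between hcon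
  have hmne : m ≠ ⊤ := ne_top_of_lt hm2
  have hmlt : m.toReal < L x u := by
    rw [← ENNReal.ofReal_lt_ofReal_iff_of_nonneg ENNReal.toReal_nonneg] at *
    · have := ENNReal.ofReal_toReal hmne
      rw [this]
      exact hm2
  have := key m.toReal ENNReal.toReal_nonneg hmlt
  rw [ENNReal.ofReal_toReal hmne] at this
  exact absurd (lt_of_le_of_lt this hm1) (lt_irrefl m)
end

section
/- If L is continuous (in addition to being nonnegative, convex in u, coercive, and locally bounded), then L⁺ = L, where L⁺(x,u) = limsup_{h→0+} (1/h) inf{ ∫_{−h}^{0} L(y(s),y'(s)) ds : y(−h)=x−hu, y(0)=x }. -/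
open MeasureTheory Set Filter
open scoped ENNReal Topology

lemma exists_subgradient {E : Type*} [NormedAddCommGroup E] [NormedSpace ℝ E]
    (f : E → ℝ) (hconv : ConvexOn ℝ Set.univ f) (hcont : Continuous f) (u : E) :
    ∃ φ : E →L[ℝ] ℝ, ∀ w, f u + φ (w - u) ≤ f w := by
  set S : Set (E × ℝ) := {p | f p.1 < p.2} with hS
  have hSconv : Convex ℝ S := by
    rintro ⟨p1, p2⟩ hp ⟨q1, q2⟩ hq a b ha hb hab
    simp only [hS, Set.mem_setOf_eq] at hp hq ⊢
    rcases ha.eq_or_lt with rfl | ha'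
    · simp only [zero_add] at hab; subst hab; simpa using hq
    rcases hb.eq_or_lt with rfl | hb'
    · simp only [add_zero] at hab; subst hab; simpa using hp
    have h1 := hconv.2 (Set.mem_univ p1) (Set.mem_univ q1) ha hb hab
    have h2 : a * p2 + b * q2 > a * f p1 + b * f q1 := by
      have := mul_lt_mul_of_pos_left hp ha'
      have := mul_lt_mul_of_pos_left hq hb'
      linarith
    simp only [Prod.smul_mk, Prod.mk_add_mk, smul_eq_mul]
    calc f (a • p1 + b • q1) ≤ a • f p1 + b • f q1 := h1
      _ < a * p2 + b * q2 := by simpa [smul_eq_mul] using h2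
  have hSopen : IsOpen S := isOpen_lt (hcont.comp continuous_fst) continuous_snd
  have hx : (u, f u) ∉ S := by simp [hS]
  obtain ⟨Φ, hΦ⟩ := geometric_hahn_banach_open_point hSconv hSopen hx
  set α := Φ ((0 : E), (1 : ℝ)) with hαdef
  have hsplit : ∀ (w : E) (t : ℝ), Φ (w, t) = Φ (w, 0) + t * α := by
    intro w t
    have hwt : (w, t) = (w, (0 : ℝ)) + t • ((0 : E), (1 : ℝ)) := by
      simp [Prod.ext_iff]
    rw [hwt, map_add, Φ.map_smul, smul_eq_mul]
  have hmemS : ∀ (w : E) (t : ℝ), f w < t → (w, t) ∈ S := fun w t h => h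
  have hα : α < 0 := by
    have h1 := hΦ (u, f u + 1) (hmemS u (f u + 1) (by linarith))
    rw [hsplit u (f u + 1), hsplit u (f u)] at h1
    linarith
  have key : ∀ w : E, Φ (w, 0) + f w * α ≤ Φ (u, 0) + f u * α := by
    intro w
    refine le_of_forall_pos_le_add fun ε hε => ?_
    have hpos : 0 < ε / (-α) := div_pos hε (by linarith)
    have h1 := hΦ (w, f w + ε / (-α)) (hmemS _ _ (by linarith))
    rw [hsplit w _, hsplit u _] at h1
    have h2 : (ε / (-α)) * α = -ε := by
      rw [div_mul_eq_mul_div, div_eq_iff (by linarith : (-α) ≠ 0)]; ring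
    nlinarith
  refine ⟨(-α)⁻¹ • (Φ.comp (ContinuousLinearMap.inl ℝ E ℝ)), fun w => ?_⟩
  have happ : ((-α)⁻¹ • (Φ.comp (ContinuousLinearMap.inl ℝ E ℝ))) (w - u)
      = (-α)⁻¹ * Φ (w - u, 0) := by
    simp [ContinuousLinearMap.smul_apply, smul_eq_mul]
  rw [happ]
  have hlin : Φ (w - u, 0) = Φ (w, 0) - Φ (u, 0) := by
    have : ((w - u, (0 : ℝ)) : E × ℝ) = (w, 0) - (u, 0) := by simp [Prod.ext_iff]
    rw [this, map_sub]
  rw [hlin]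
  have hαpos : 0 < -α := by linarith
  have hk := key w
  have h3 : (-α)⁻¹ * (Φ (w, 0) - Φ (u, 0)) ≤ (-α)⁻¹ * ((f u - f w) * α) := by
    apply mul_le_mul_of_nonneg_left _ (by positivity)
    linarith
  have h4 : (-α)⁻¹ * ((f u - f w) * α) = f w - f u := by
    field_simp
    rw [mul_div_cancel_left₀ _ hα.ne]
    ring
  linarith

set_option maxHeartbeats 1600000 in
theorem stmt_14 {n : ℕ}
    (L : EuclideanSpace ℝ (Fin n) → EuclideanSpace ℝ (Fin n) → ℝ)
    (hL0 : ∀ x u, 0 ≤ L x u)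
    (hLcont : Continuous
      (fun p : EuclideanSpace ℝ (Fin n) × EuclideanSpace ℝ (Fin n) => L p.1 p.2))
    (hLconv : ∀ x, ConvexOn ℝ Set.univ (L x))
    (Θ : EuclideanSpace ℝ (Fin n) → ℝ) (hΘ0 : ∀ u, 0 ≤ Θ u)
    (hΘconv : ConvexOn ℝ Set.univ Θ) (hΘsuper : Superlinear Θ)
    (hcoerc : ∀ x u, Θ u ≤ L x u)
    (hLbd : LocallyBounded L) :
    ∀ x u : EuclideanSpace ℝ (Fin n), LPlus L x u = ENNReal.ofReal (L x u) := by

  intro x u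
  have hLx_cont : Continuous (fun w => L x w) :=
    hLcont.comp (continuous_const.prodMk continuous_id)
  refine le_antisymm ?_ ?_
  · -- Upper bound: LPlus ≤ ofReal (L x u)
    have upper : ∀ ε : ℝ, 0 < ε → LPlus L x u ≤ ENNReal.ofReal (L x u + ε) := by
      intro ε hε
      have hcont0 : ContinuousAt (fun s : ℝ => L (x + s • u) u) 0 :=
        (hLcont.comp (((continuous_const.add (continuous_id.smul continuous_const)).prodMk
          continuous_const))).continuousAt
      have h1 : ∀ᶠ s in 𝓝 (0 : ℝ), L (x + s • u) u < L x u + ε := by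
        have hval : (fun s : ℝ => L (x + s • u) u) 0 < L x u + ε := by
          simp only [zero_smul, add_zero]; linarith
        exact hcont0.eventually_lt continuousAt_const hval
      obtain ⟨h₀, h₀pos, hh₀⟩ := Metric.eventually_nhds_iff.mp h1
      refine Filter.limsup_le_of_le (by isBoundedDefault) ?_
      filter_upwards [Ioo_mem_nhdsGT_of_mem ⟨le_refl (0:ℝ), h₀pos⟩] with h hh
      have hhpos : 0 < h := hh.1
      have hneg : (-h : ℝ) ≤ 0 := by linarith
      have hIcont : Continuous (fun s : ℝ => L (x + s • u) u) :=
        hLcont.comp ((continuous_const.add (continuous_id.smul continuous_const)).prodMk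
          continuous_const)
      have hIint : IntervalIntegrable (fun s : ℝ => L (x + s • u) u) volume (-h) 0 :=
        hIcont.intervalIntegrable _ _
      have hle : arcInf L x u h ≤ ENNReal.ofReal (∫ s in (-h)..(0:ℝ), L (x + s • u) u) := by
        refine iInf_le_of_le (fun s => x + s • u) ?_
        refine iInf_le_of_le (fun _ => u) ?_
        refine iInf_le_of_le (intervalIntegrable_const) ?_
        refine iInf_le_of_le ?_ ?_
        · intro s _
          rw [intervalIntegral.integral_const]
          module
        refine iInf_le_of_le (by simp) ?_
        exact iInf_le _ hIint
      have hintbnd : (∫ s in (-h)..(0:ℝ), L (x + s • u) u) ≤ h * (L x u + ε) := by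
        have hmono : (∫ s in (-h)..(0:ℝ), L (x + s • u) u)
            ≤ ∫ _ in (-h)..(0:ℝ), (L x u + ε) := by
          refine intervalIntegral.integral_mono_on hneg hIint intervalIntegrable_const ?_
          intro s hs
          refine le_of_lt (hh₀ ?_)
          rw [Real.dist_eq, sub_zero, abs_lt]
          constructor
          · linarith [hs.1, hh.2]
          · linarith [hs.2, h₀pos]
        rw [intervalIntegral.integral_const, smul_eq_mul] at hmono
        calc (∫ s in (-h)..(0:ℝ), L (x + s • u) u) ≤ (0 - -h) * (L x u + ε) := hmono
          _ = h * (L x u + ε) := by ring_nf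
      have hq : arcInf L x u h ≤ ENNReal.ofReal (h * (L x u + ε)) :=
        hle.trans (ENNReal.ofReal_le_ofReal hintbnd)
      calc arcInf L x u h / ENNReal.ofReal h
          ≤ ENNReal.ofReal (h * (L x u + ε)) / ENNReal.ofReal h :=
            ENNReal.div_le_div_right hq _
        _ = ENNReal.ofReal (L x u + ε) := by
            rw [ENNReal.ofReal_mul hhpos.le, mul_comm, mul_div_assoc,
              ENNReal.div_self (by simp [ENNReal.ofReal_pos.2 hhpos, ne_of_gt] :
                ENNReal.ofReal h ≠ 0) ENNReal.ofReal_ne_top, mul_one]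
    refine ENNReal.le_of_forall_pos_le_add fun ε hε _ => ?_
    calc LPlus L x u ≤ ENNReal.ofReal (L x u + ε) := upper ε (by exact_mod_cast hε)
      _ ≤ ENNReal.ofReal (L x u) + ENNReal.ofReal ε := ENNReal.ofReal_add_le
      _ = ENNReal.ofReal (L x u) + (ε : ℝ≥0∞) := by rw [ENNReal.ofReal_coe_nnreal]
  · -- Lower bound: ofReal (L x u) ≤ LPlus
    have lower : ∀ ε : ℝ, 0 < ε → ENNReal.ofReal (L x u - ε) ≤ LPlus L x u := by
      intro ε hε
      rcases le_or_gt (L x u - ε) 0 with hc | hc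
      · simp [ENNReal.ofReal_eq_zero.2 hc]
      obtain ⟨φ, hφ⟩ := exists_subgradient (L x) (hLconv x) hLx_cont u
      obtain ⟨R₁', hR₁'⟩ := hΘsuper 1
      set R₁ : ℝ := max R₁' 0 with hR₁def
      have hR₁nonneg : 0 ≤ R₁ := le_max_right _ _
      have hnormle : ∀ w : EuclideanSpace ℝ (Fin n), ‖w‖ ≤ R₁ + Θ w := by
        intro w
        rcases le_or_gt R₁ ‖w‖ with hw | hw
        · have := hR₁' w ((le_max_left _ _).trans hw)
          have hΘw := hΘ0 w
          calc ‖w‖ = 1 * ‖w‖ := (one_mul _).symm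
            _ ≤ Θ w := this
            _ ≤ R₁ + Θ w := by linarith
        · linarith [hΘ0 w]
      set M : ℝ := ‖φ‖ + |L x u| + ‖φ‖ * ‖u‖ + 1 with hMdef
      obtain ⟨R₂, hR₂⟩ := hΘsuper M
      set R : ℝ := max R₂ 1 with hRdef
      have hK : IsCompact ((Metric.closedBall x 1) ×ˢ
          (Metric.closedBall (0 : EuclideanSpace ℝ (Fin n)) R)) :=
        (isCompact_closedBall x 1).prod (isCompact_closedBall 0 R)
      have hUC := hK.uniformContinuousOn_of_continuous hLcont.continuousOn
      obtain ⟨δ', hδ'pos, hδ'⟩ := Metric.uniformContinuousOn_iff_le.mp hUC ε hε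
      set δ : ℝ := min δ' 1 with hδdef
      have hδpos : 0 < δ := lt_min hδ'pos one_pos
      have claim : ∀ z w, ‖z - x‖ ≤ δ → L x u + φ (w - u) - ε ≤ L z w := by
        intro z w hz
        rcases le_or_gt ‖w‖ R with hw | hw
        · have hzball : z ∈ Metric.closedBall x 1 := by
            rw [Metric.mem_closedBall, dist_eq_norm]
            exact hz.trans (min_le_right _ _)
          have hwball : w ∈ Metric.closedBall (0 : EuclideanSpace ℝ (Fin n)) R := by
            rw [Metric.mem_closedBall, dist_zero_right]; exact hw
          have hxball : x ∈ Metric.closedBall x 1 := Metric.mem_closedBall_self one_pos.le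
          have hdist : dist ((z, w) : _ × _) (x, w) ≤ δ' := by
            rw [Prod.dist_eq]
            simp only [dist_self]
            rw [max_le_iff]
            constructor
            · rw [dist_eq_norm]; exact hz.trans (min_le_left _ _)
            · exact hδ'pos.le
          have h1 := hδ' (z, w) ⟨hzball, hwball⟩ (x, w) ⟨hxball, hwball⟩ hdist
          rw [Real.dist_eq] at h1
          have h2 := hφ w
          have := abs_le.mp h1
          linarith [this.1]
        · have hΘw : M * ‖w‖ ≤ Θ w := hR₂ w (le_of_lt (lt_of_le_of_lt (le_max_left _ _) hw))
          have h3 : Θ w ≤ L z w := hcoerc z w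
          have hw1 : 1 ≤ ‖w‖ := le_of_lt (lt_of_le_of_lt (le_max_right _ _) hw)
          have hb1 : φ w ≤ ‖φ‖ * ‖w‖ := (le_abs_self _).trans (φ.le_opNorm w)
          have hb2 : -(φ u) ≤ ‖φ‖ * ‖u‖ := (neg_le_abs _).trans (φ.le_opNorm u)
          have hφwu : φ (w - u) = φ w - φ u := map_sub φ w u
          have hL : L x u ≤ |L x u| := le_abs_self _
          have hφn : 0 ≤ ‖φ‖ := norm_nonneg _
          nlinarith [mul_le_mul_of_nonneg_left hw1 (abs_nonneg (L x u)),
            mul_le_mul_of_nonneg_left hw1 (mul_nonneg hφn (norm_nonneg u))]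
      set C : ℝ := R₁ + L x u + 1 with hCdef
      have hCpos : 0 < C := by
        have := hL0 x u; simp only [hCdef]; linarith
      set h₀ : ℝ := δ / C with hh₀def
      have h₀pos : 0 < h₀ := div_pos hδpos hCpos
      refine Filter.le_limsup_of_frequently_le (Filter.Eventually.frequently ?_)
        (by isBoundedDefault)
      filter_upwards [Ioc_mem_nhdsGT_of_mem ⟨le_refl (0:ℝ), h₀pos⟩] with h hh
      have hhpos : 0 < h := hh.1
      have hneg : (-h : ℝ) ≤ 0 := by linarith
      rw [ENNReal.le_div_iff_mul_le
        (Or.inl (by simp [ENNReal.ofReal_pos.2 hhpos, ne_of_gt]))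
        (Or.inl ENNReal.ofReal_ne_top), ← ENNReal.ofReal_mul hc.le]
      refine le_iInf fun y => le_iInf fun y' => le_iInf fun hy' => le_iInf fun hyf =>
        le_iInf fun hy0 => le_iInf fun hLint => ?_
      refine ENNReal.ofReal_le_ofReal ?_
      -- goal : (L x u - ε) * h ≤ ∫ s in (-h)..0, L (y s) (y' s)
      have hint_tot : (∫ τ in (-h)..(0:ℝ), y' τ) = h • u := by
        have h1 := hyf 0 ⟨hneg, le_refl 0⟩
        rw [hy0] at h1
        have h2 : (x - h • u) + (∫ τ in (-h)..(0:ℝ), y' τ) = x := h1.symm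
        have h3 : (∫ τ in (-h)..(0:ℝ), y' τ) = x - (x - h • u) := by
          rw [eq_sub_iff_add_eq, add_comm]; exact h2
        rw [h3, sub_sub_cancel]
      by_cases hcase : h * L x u ≤ ∫ s in (-h)..(0:ℝ), L (y s) (y' s)
      · nlinarith
      push_neg at hcase
      have hnormint : IntervalIntegrable (fun s => ‖y' s‖) volume (-h) 0 := hy'.norm
      have hbound1 : (∫ s in (-h)..(0:ℝ), ‖y' s‖) ≤ h * (R₁ + L x u) := by
        have hmono : (∫ s in (-h)..(0:ℝ), ‖y' s‖)
            ≤ ∫ s in (-h)..(0:ℝ), (R₁ + L (y s) (y' s)) := by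
          refine intervalIntegral.integral_mono_on hneg hnormint
            (intervalIntegrable_const.add hLint) ?_
          intro s _
          calc ‖y' s‖ ≤ R₁ + Θ (y' s) := hnormle _
            _ ≤ R₁ + L (y s) (y' s) := by linarith [hcoerc (y s) (y' s)]
        rw [intervalIntegral.integral_add intervalIntegrable_const hLint,
          intervalIntegral.integral_const, smul_eq_mul] at hmono
        have h4 : (0 - -h) * R₁ = h * R₁ := by ring
        rw [h4] at hmono
        nlinarith
      have hynear : ∀ s ∈ Set.Icc (-h) (0:ℝ), ‖y s - x‖ ≤ δ := by
        intro s hs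
        have hsub1 : Set.uIcc (-h) s ⊆ Set.uIcc (-h) (0:ℝ) :=
          Set.uIcc_subset_uIcc left_mem_uIcc (by rw [Set.uIcc_of_le hneg]; exact hs)
        have hsub2 : Set.uIcc s (0:ℝ) ⊆ Set.uIcc (-h) (0:ℝ) :=
          Set.uIcc_subset_uIcc (by rw [Set.uIcc_of_le hneg]; exact hs) right_mem_uIcc
        have hsplit : (∫ τ in (-h)..s, y' τ) + (∫ τ in s..(0:ℝ), y' τ)
            = ∫ τ in (-h)..(0:ℝ), y' τ :=
          intervalIntegral.integral_add_adjacent_intervals (hy'.mono_set hsub1)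
            (hy'.mono_set hsub2)
        have hys : y s - x = -(∫ τ in s..(0:ℝ), y' τ) := by
          rw [hyf s hs]
          have : (∫ τ in (-h)..s, y' τ) = h • u - (∫ τ in s..(0:ℝ), y' τ) := by
            rw [eq_sub_iff_add_eq, hsplit, hint_tot]
          rw [this]
          abel
        rw [hys, norm_neg]
        calc ‖∫ τ in s..(0:ℝ), y' τ‖ ≤ ∫ τ in s..(0:ℝ), ‖y' τ‖ :=
            intervalIntegral.norm_integral_le_integral_norm hs.2
          _ ≤ ∫ τ in (-h)..(0:ℝ), ‖y' τ‖ :=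
            intervalIntegral.integral_mono_interval hs.1 hs.2 le_rfl
              (Filter.Eventually.of_forall fun _ => norm_nonneg _) hnormint
          _ ≤ h * (R₁ + L x u) := hbound1
          _ ≤ h₀ * C := by
              have h5 : R₁ + L x u ≤ C := by simp only [hCdef]; linarith
              have h6 : 0 ≤ R₁ + L x u := by linarith [hL0 x u]
              nlinarith [hh.2]
          _ = δ := div_mul_cancel₀ δ hCpos.ne'
      have hφint : IntervalIntegrable (fun s => φ (y' s)) volume (-h) 0 :=
        ⟨φ.integrable_comp hy'.1, φ.integrable_comp hy'.2⟩
      have hptwise : ∀ s ∈ Set.Icc (-h) (0:ℝ),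
          (L x u - ε) + (φ (y' s) - φ u) ≤ L (y s) (y' s) := by
        intro s hs
        have h1 := claim (y s) (y' s) (hynear s hs)
        rw [map_sub] at h1
        linarith
      have hint2 : (∫ s in (-h)..(0:ℝ), ((L x u - ε) + (φ (y' s) - φ u)))
          ≤ ∫ s in (-h)..(0:ℝ), L (y s) (y' s) :=
        intervalIntegral.integral_mono_on hneg
          (intervalIntegrable_const.add (hφint.sub intervalIntegrable_const)) hLint hptwise
      have hφtot : (∫ s in (-h)..(0:ℝ), φ (y' s)) = φ (h • u) := by
        rw [← hint_tot]
        exact φ.intervalIntegral_comp_comm hy'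
      rw [intervalIntegral.integral_add intervalIntegrable_const
          (hφint.sub intervalIntegrable_const),
        intervalIntegral.integral_sub hφint intervalIntegrable_const,
        intervalIntegral.integral_const, intervalIntegral.integral_const, hφtot] at hint2
      have hsm : φ (h • u) = h * φ u := by rw [φ.map_smul, smul_eq_mul]
      rw [hsm] at hint2
      simp only [smul_eq_mul] at hint2
      nlinarith
    refine ENNReal.le_of_forall_pos_le_add fun ε hε _ => ?_
    have hεpos : (0:ℝ) < (ε:ℝ) := by exact_mod_cast hε
    calc ENNReal.ofReal (L x u) = ENNReal.ofReal ((L x u - ε) + ε) := by rw [sub_add_cancel]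
      _ ≤ ENNReal.ofReal (L x u - ε) + ENNReal.ofReal ε := ENNReal.ofReal_add_le
      _ ≤ LPlus L x u + (ε : ℝ≥0∞) :=
          add_le_add (lower ε hεpos) (le_of_eq ENNReal.ofReal_coe_nnreal)
end

section
/- Let V be the value function of the Bolza problem with continuous L. Then V is a viscosity supersolution of V_t + H(x,−V_x) = 0 on (0,∞)×ℝⁿ: for every (t,x) with t > 0 and every (p_t,p_x) ∈ ∂₋V(t,x), one has p_t + H(x,−p_x) ≥ 0, where H(x,p) = sup_{u∈ℝⁿ} (⟨p,u⟩ − L(x,u)). -/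
open MeasureTheory Set Filter
open scoped ENNReal

open scoped RealInnerProductSpace

/-- The Hamiltonian `H(x,p) = sup_u (⟨p,u⟩ - L(x,u))`. -/
noncomputable def hamiltonian {n : ℕ}
    (L : EuclideanSpace ℝ (Fin n) → EuclideanSpace ℝ (Fin n) → ℝ)
    (x p : EuclideanSpace ℝ (Fin n)) : ℝ :=
  sSup {r : ℝ | ∃ u : EuclideanSpace ℝ (Fin n), r = ⟪p, u⟫ - L x u}

/-- The subdifferential `∂₋W(t,x)` of a function `W : ℝ × ℝⁿ → EReal`. -/
def subdifferentialP {n : ℕ}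
    (W : ℝ × EuclideanSpace ℝ (Fin n) → EReal) (p : ℝ × EuclideanSpace ℝ (Fin n)) :
    Set (ℝ × EuclideanSpace ℝ (Fin n)) :=
  {q | (0 : EReal) ≤ Filter.liminf (fun z : ℝ × EuclideanSpace ℝ (Fin n) =>
      ((‖z - p‖⁻¹ : ℝ) : EReal) *
        (W z - W p - ((q.1 * (z.1 - p.1) + ⟪q.2, z.2 - p.2⟫ : ℝ) : EReal)))
    (nhdsWithin p {p}ᶜ)}

section helpers
variable {n : ℕ} {L : EuclideanSpace ℝ (Fin n) → EuclideanSpace ℝ (Fin n) → ℝ}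
  {Θ : EuclideanSpace ℝ (Fin n) → ℝ}
lemma bolzaValue_le (L : EuclideanSpace ℝ (Fin n) → EuclideanSpace ℝ (Fin n) → ℝ)
    (φ : EuclideanSpace ℝ (Fin n) → ℝ≥0∞) (t : ℝ) (x : EuclideanSpace ℝ (Fin n))
    (y y' : ℝ → EuclideanSpace ℝ (Fin n))
    (h1 : IntervalIntegrable y' volume 0 t)
    (h2 : ∀ s ∈ Set.Icc (0:ℝ) t, y s = x + ∫ τ in (0:ℝ)..s, y' τ)
    (h3 : IntervalIntegrable (fun s => L (y s) (y' s)) volume 0 t) :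
    bolzaValue L φ t x ≤ ENNReal.ofReal (∫ s in (0:ℝ)..t, L (y s) (y' s)) + φ (y t) :=
  iInf_le_of_le y <| iInf_le_of_le y' <| iInf_le_of_le h1 <| iInf_le_of_le h2 <| iInf_le _ h3

lemma bolzaValue_lt (L : EuclideanSpace ℝ (Fin n) → EuclideanSpace ℝ (Fin n) → ℝ)
    (φ : EuclideanSpace ℝ (Fin n) → ℝ≥0∞) (t : ℝ) (x : EuclideanSpace ℝ (Fin n))
    (c : ℝ≥0∞) (h : bolzaValue L φ t x < c) :
    ∃ y y' : ℝ → EuclideanSpace ℝ (Fin n),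
      ∃ _ : IntervalIntegrable y' volume 0 t,
      ∃ _ : ∀ s ∈ Set.Icc (0:ℝ) t, y s = x + ∫ τ in (0:ℝ)..s, y' τ,
      ∃ _ : IntervalIntegrable (fun s => L (y s) (y' s)) volume 0 t,
      ENNReal.ofReal (∫ s in (0:ℝ)..t, L (y s) (y' s)) + φ (y t) < c := by
  simpa only [bolzaValue, iInf_lt_iff] using h

lemma bolzaValue_ne_top (L : EuclideanSpace ℝ (Fin n) → EuclideanSpace ℝ (Fin n) → ℝ)
    (hLcont : Continuous
      (fun p : EuclideanSpace ℝ (Fin n) × EuclideanSpace ℝ (Fin n) => L p.1 p.2))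
    (φ : EuclideanSpace ℝ (Fin n) → ℝ≥0∞) (hφ : ∃ x, φ x ≠ ⊤)
    (t : ℝ) (ht : 0 < t) (x : EuclideanSpace ℝ (Fin n)) :
    bolzaValue L φ t x ≠ ⊤ := by
  obtain ⟨x₀, hx₀⟩ := hφ
  set v : EuclideanSpace ℝ (Fin n) := t⁻¹ • (x₀ - x) with hv
  have hyt : x + t • v = x₀ := by
    rw [hv, smul_smul, mul_inv_cancel₀ ht.ne', one_smul]; abel
  have h3 : IntervalIntegrable (fun s => L (x + s • v) v) volume 0 t :=
    (hLcont.comp (by continuity : Continuous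
      (fun s : ℝ => ((x + s • v, v) : EuclideanSpace ℝ (Fin n) × EuclideanSpace ℝ (Fin n))))).intervalIntegrable 0 t
  have hle := bolzaValue_le L φ t x (fun s => x + s • v) (fun _ => v)
    (intervalIntegrable_const) (fun s _ => by
      rw [intervalIntegral.integral_const]; simp) h3
  refine ne_top_of_le_ne_top ?_ hle
  simp only [hyt, ne_eq, ENNReal.add_eq_top, ENNReal.ofReal_ne_top, false_or]
  exact hx₀

lemma bolzaValue_tail (L : EuclideanSpace ℝ (Fin n) → EuclideanSpace ℝ (Fin n) → ℝ)
    (φ : EuclideanSpace ℝ (Fin n) → ℝ≥0∞) (t h : ℝ) (x : EuclideanSpace ℝ (Fin n))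
    (hh : 0 ≤ h) (hht : h ≤ t)
    (y y' : ℝ → EuclideanSpace ℝ (Fin n))
    (h1 : IntervalIntegrable y' volume 0 t)
    (h2 : ∀ s ∈ Set.Icc (0:ℝ) t, y s = x + ∫ τ in (0:ℝ)..s, y' τ)
    (h3 : IntervalIntegrable (fun s => L (y s) (y' s)) volume 0 t) :
    bolzaValue L φ (t - h) (y h) ≤
      ENNReal.ofReal (∫ s in h..t, L (y s) (y' s)) + φ (y t) := by
  have hsub : ∀ a b : ℝ, 0 ≤ a → a ≤ b → b ≤ t → uIcc a b ⊆ uIcc 0 t := by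
    intro a b ha hab hbt
    rw [uIcc_of_le hab, uIcc_of_le (ha.trans (hab.trans hbt))]
    exact Icc_subset_Icc ha hbt
  have key := bolzaValue_le L φ (t - h) (y h)
    (fun s => y (s + h)) (fun s => y' (s + h))
    (by
      have := (h1.mono_set (hsub h t hh hht le_rfl)).comp_add_right h
      simpa using this)
    (by
      intro s hs
      obtain ⟨hs0, hst⟩ := hs
      have hsh : s + h ∈ Set.Icc (0:ℝ) t := ⟨by linarith, by linarith⟩
      show y (s + h) = y h + ∫ τ in (0:ℝ)..s, y' (τ + h)
      rw [h2 (s + h) hsh, h2 h ⟨hh, hht⟩]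
      have e1 : ∫ τ in (0:ℝ)..s, y' (τ + h) = ∫ τ in h..(s+h), y' τ := by
        simpa using intervalIntegral.integral_comp_add_right y' h (a := 0) (b := s)
      have e2 : (∫ τ in (0:ℝ)..h, y' τ) + ∫ τ in h..(s+h), y' τ = ∫ τ in (0:ℝ)..(s+h), y' τ :=
        intervalIntegral.integral_add_adjacent_intervals
          (h1.mono_set (hsub 0 h le_rfl hh hht))
          (h1.mono_set (hsub h (s+h) hh (by linarith) (by linarith)))
      rw [e1, ← e2]; abel)
    (by
      have := ((h3.mono_set (hsub h t hh hht le_rfl)).comp_add_right h)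
      simpa using this)
  have e3 : ∫ s in (0:ℝ)..(t - h), L (y (s + h)) (y' (s + h)) = ∫ s in h..t, L (y s) (y' s) := by
    simpa using intervalIntegral.integral_comp_add_right
      (fun s => L (y s) (y' s)) h (a := 0) (b := t - h)
  have e4 : t - h + h = t := by ring
  simpa [e3, e4] using key

lemma ham_elt_le (hL0 : ∀ x u, 0 ≤ L x u) (hΘsuper : Superlinear Θ)
    (hcoerc : ∀ x u, Θ u ≤ L x u) (K : ℝ) (hK : 0 ≤ K) :
    ∃ B : ℝ, 0 ≤ B ∧ ∀ (y q u : EuclideanSpace ℝ (Fin n)), ‖q‖ ≤ K →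
      ⟪q, u⟫ - L y u ≤ B := by
  obtain ⟨R, hR⟩ := hΘsuper (K + 1)
  refine ⟨K * max R 0, mul_nonneg hK (le_max_right _ _), fun y q u hq => ?_⟩
  have hiq : ⟪q, u⟫ ≤ ‖q‖ * ‖u‖ := real_inner_le_norm q u
  rcases le_or_gt ‖u‖ (max R 0) with hu | hu
  · have : ⟪q, u⟫ - L y u ≤ ‖q‖ * ‖u‖ := by
      have := hL0 y u; linarith
    calc ⟪q, u⟫ - L y u ≤ ‖q‖ * ‖u‖ := this
      _ ≤ K * max R 0 := by
        apply mul_le_mul hq hu (norm_nonneg _) hK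
  · have hRu : R ≤ ‖u‖ := le_trans (le_max_left _ _) hu.le
    have hΘu := hR u hRu
    have hLu := hcoerc y u
    have hun : 0 ≤ ‖u‖ := norm_nonneg _
    have : ⟪q, u⟫ - L y u ≤ K * ‖u‖ - (K + 1) * ‖u‖ := by
      have : ⟪q, u⟫ ≤ K * ‖u‖ := hiq.trans (mul_le_mul_of_nonneg_right hq hun)
      linarith
    have h2 : K * ‖u‖ - (K + 1) * ‖u‖ = -‖u‖ := by ring
    nlinarith [mul_nonneg hK (le_max_right R 0)]

lemma ham_bddAbove (hL0 : ∀ x u, 0 ≤ L x u) (hΘsuper : Superlinear Θ)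
    (hcoerc : ∀ x u, Θ u ≤ L x u) (y q : EuclideanSpace ℝ (Fin n)) :
    BddAbove {r : ℝ | ∃ u : EuclideanSpace ℝ (Fin n), r = ⟪q, u⟫ - L y u} := by
  obtain ⟨B, -, hB⟩ := ham_elt_le hL0 hΘsuper hcoerc ‖q‖ (norm_nonneg q)
  exact ⟨B, fun r ⟨u, hu⟩ => hu ▸ hB y q u le_rfl⟩

lemma le_hamiltonian (hL0 : ∀ x u, 0 ≤ L x u) (hΘsuper : Superlinear Θ)
    (hcoerc : ∀ x u, Θ u ≤ L x u) (y q u : EuclideanSpace ℝ (Fin n)) :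
    ⟪q, u⟫ - L y u ≤ hamiltonian L y q :=
  le_csSup (ham_bddAbove hL0 hΘsuper hcoerc y q) ⟨u, rfl⟩

lemma hamiltonian_usc (hL0 : ∀ x u, 0 ≤ L x u)
    (hLcont : Continuous
      (fun p : EuclideanSpace ℝ (Fin n) × EuclideanSpace ℝ (Fin n) => L p.1 p.2))
    (hΘsuper : Superlinear Θ) (hcoerc : ∀ x u, Θ u ≤ L x u)
    (x p : EuclideanSpace ℝ (Fin n)) {δ : ℝ} (hδ : 0 < δ) :
    ∃ r : ℝ, 0 < r ∧ r ≤ 1 ∧ ∀ y q : EuclideanSpace ℝ (Fin n),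
      ‖y - x‖ ≤ r → ‖q - p‖ ≤ r →
      hamiltonian L y q ≤ hamiltonian L x p + δ := by
  set K := ‖p‖ + 1 with hK
  -- bound for L y 0 on the unit ball
  obtain ⟨C₀, hC₀0, hC₀⟩ : ∃ C₀ : ℝ, 0 ≤ C₀ ∧ ∀ y ∈ Metric.closedBall x 1, L y 0 ≤ C₀ := by
    have hcont : Continuous (fun y : EuclideanSpace ℝ (Fin n) => L y 0) :=
      hLcont.comp (continuous_id.prodMk continuous_const)
    obtain ⟨C, hC⟩ := ((isCompact_closedBall x 1).image hcont).bddAbove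
    refine ⟨max C 0, le_max_right _ _, fun y hy => ?_⟩
    exact le_trans (hC (Set.mem_image_of_mem _ hy)) (le_max_left _ _)
  obtain ⟨R, hRsl⟩ := hΘsuper (K + C₀ + 1)
  set R' := max R 1 with hR'
  have hR'1 : (1:ℝ) ≤ R' := le_max_right _ _
  have hR'0 : (0:ℝ) ≤ R' := zero_le_one.trans hR'1
  -- claim A : large u are dominated by u = 0
  have claimA : ∀ y ∈ Metric.closedBall x 1, ∀ q : EuclideanSpace ℝ (Fin n), ‖q‖ ≤ K →
      ∀ u : EuclideanSpace ℝ (Fin n), R' < ‖u‖ → ⟪q, u⟫ - L y u ≤ ⟪q, (0:EuclideanSpace ℝ (Fin n))⟫ - L y 0 := by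
    intro y hy q hq u hu
    have h1 : ⟪q, u⟫ ≤ K * ‖u‖ :=
      (real_inner_le_norm q u).trans (mul_le_mul_of_nonneg_right hq (norm_nonneg u))
    have h2 : (K + C₀ + 1) * ‖u‖ ≤ Θ u := hRsl u ((le_max_left R 1).trans hu.le)
    have h3 : Θ u ≤ L y u := hcoerc y u
    have h4 : L y 0 ≤ C₀ := hC₀ y hy
    have h5 : (1:ℝ) ≤ ‖u‖ := hR'1.trans hu.le
    have h6 : ⟪q, (0:EuclideanSpace ℝ (Fin n))⟫ = 0 := inner_zero_right q
    rw [h6]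
    nlinarith
  -- uniform continuity of L on a compact product set
  have hScomp : IsCompact (Metric.closedBall x 1 ×ˢ Metric.closedBall (0:EuclideanSpace ℝ (Fin n)) R') :=
    (isCompact_closedBall _ _).prod (isCompact_closedBall _ _)
  have hUC := hScomp.uniformContinuousOn_of_continuous hLcont.continuousOn
  rw [Metric.uniformContinuousOn_iff] at hUC
  obtain ⟨r₁, hr₁pos, hr₁⟩ := hUC (δ/2) (by linarith)
  set r := min 1 (min (r₁/2) (δ/(2*(R'+1)))) with hrdef
  have hrpos : 0 < r := by
    apply lt_min zero_lt_one
    apply lt_min (by linarith) (div_pos hδ (by linarith))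
  refine ⟨r, hrpos, min_le_left _ _, ?_⟩
  intro y q hyx hqp
  have hy1 : y ∈ Metric.closedBall x 1 := by
    rw [Metric.mem_closedBall, dist_eq_norm]
    exact hyx.trans (min_le_left _ _)
  have hqK : ‖q‖ ≤ K := by
    have h8 := norm_add_le (q - p) p
    rw [sub_add_cancel] at h8
    have hr1 : r ≤ 1 := min_le_left _ _
    rw [hK]
    linarith
  -- the bound for each element with small u
  have key : ∀ u : EuclideanSpace ℝ (Fin n), ‖u‖ ≤ R' →
      ⟪q, u⟫ - L y u ≤ hamiltonian L x p + δ := by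
    intro u hu
    have hHxp : ⟪p, u⟫ - L x u ≤ hamiltonian L x p :=
      le_hamiltonian hL0 hΘsuper hcoerc x p u
    have hinner : ⟪q - p, u⟫ ≤ r * R' := by
      calc ⟪q - p, u⟫ ≤ ‖q - p‖ * ‖u‖ := real_inner_le_norm _ _
        _ ≤ r * R' := mul_le_mul hqp hu (norm_nonneg _) hrpos.le
    have hrR' : r * R' ≤ δ/2 := by
      have h7 : r ≤ δ/(2*(R'+1)) := (min_le_right _ _).trans (min_le_right _ _)
      have h7' : r * (2*(R'+1)) ≤ δ := (le_div_iff₀ (by linarith : (0:ℝ) < 2*(R'+1))).mp h7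
      nlinarith
    have hLdiff : L x u - L y u ≤ δ/2 := by
      have hmem1 : (y, u) ∈ Metric.closedBall x 1 ×ˢ Metric.closedBall (0:EuclideanSpace ℝ (Fin n)) R' :=
        ⟨hy1, by simpa [Metric.mem_closedBall, dist_eq_norm] using hu⟩
      have hmem2 : (x, u) ∈ Metric.closedBall x 1 ×ˢ Metric.closedBall (0:EuclideanSpace ℝ (Fin n)) R' :=
        ⟨Metric.mem_closedBall_self zero_le_one, by simpa [Metric.mem_closedBall, dist_eq_norm] using hu⟩
      have hdist : dist ((y, u) : EuclideanSpace ℝ (Fin n) × EuclideanSpace ℝ (Fin n)) (x, u) < r₁ := by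
        rw [Prod.dist_eq]
        simp only [dist_self, dist_eq_norm]
        have : ‖y - x‖ ≤ r := hyx
        have hrr₁ : r < r₁ := by
          calc r ≤ r₁/2 := (min_le_right _ _).trans (min_le_left _ _)
            _ < r₁ := by linarith
        simpa [max_lt_iff] using lt_of_le_of_lt this hrr₁
      have := hr₁ _ hmem1 _ hmem2 hdist
      rw [Real.dist_eq] at this
      have := abs_lt.mp this
      linarith [this.1]
    have h9 : ⟪q - p, u⟫ = ⟪q, u⟫ - ⟪p, u⟫ := inner_sub_left q p u
    linarith
  -- conclude via csSup_le
  refine csSup_le ⟨⟪q, (0:EuclideanSpace ℝ (Fin n))⟫ - L y 0, 0, rfl⟩ ?_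
  rintro b ⟨u, rfl⟩
  rcases le_or_gt ‖u‖ R' with hu | hu
  · exact key u hu
  · exact (claimA y hy1 q hqK u hu).trans (key 0 (by simpa using hR'0))

end helpers

set_option maxHeartbeats 1000000 in
theorem stmt_18 {n : ℕ}
    (L : EuclideanSpace ℝ (Fin n) → EuclideanSpace ℝ (Fin n) → ℝ)
    (hL0 : ∀ x u, 0 ≤ L x u)
    (hLcont : Continuous
      (fun p : EuclideanSpace ℝ (Fin n) × EuclideanSpace ℝ (Fin n) => L p.1 p.2))
    (hLconv : ∀ x, ConvexOn ℝ Set.univ (L x))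
    (Θ : EuclideanSpace ℝ (Fin n) → ℝ) (hΘ0 : ∀ u, 0 ≤ Θ u)
    (hΘconv : ConvexOn ℝ Set.univ Θ) (hΘsuper : Superlinear Θ)
    (hcoerc : ∀ x u, Θ u ≤ L x u)
    (φ : EuclideanSpace ℝ (Fin n) → ℝ≥0∞)
    (hφlsc : LowerSemicontinuous φ) (hφ : ∃ x, φ x ≠ ⊤) :
    ∀ (t : ℝ) (x : EuclideanSpace ℝ (Fin n)), 0 < t →
      ∀ pt : ℝ, ∀ px : EuclideanSpace ℝ (Fin n),
        (pt, px) ∈ subdifferentialP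
          (fun q : ℝ × EuclideanSpace ℝ (Fin n) =>
            ((bolzaValue L φ q.1 q.2 : ℝ≥0∞) : EReal)) (t, x) →
        0 ≤ pt + hamiltonian L x (-px) := by
  intro t x ht pt px hmem
  by_contra hcon
  push_neg at hcon
  set Hs := hamiltonian L x (-px) with hHsdef
  set c : ℝ := -(pt + Hs) with hcdef
  have hcpos : 0 < c := by rw [hcdef]; linarith only [hcon]
  clear_value Hs c
  obtain ⟨r, hr0, hr1, hHr⟩ := hamiltonian_usc hL0 hLcont hΘsuper hcoerc x (-px)
    (show 0 < c/4 from div_pos hcpos (by norm_num))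
  rw [← hHsdef] at hHr
  obtain ⟨R₁, hR₁⟩ := hΘsuper 1
  set R₁' := max R₁ 0 with hR₁'def
  have hR₁'0 : 0 ≤ R₁' := le_max_right _ _
  have hptw1 : ∀ Y v : EuclideanSpace ℝ (Fin n), ‖v‖ ≤ R₁' + L Y v := by
    intro Y v
    rcases le_or_gt ‖v‖ R₁' with hv | hv
    · linarith only [hL0 Y v, hv]
    · have h1 : R₁ ≤ ‖v‖ := (le_max_left _ _).trans hv.le
      have h2 := hR₁ v h1
      have h3 := hcoerc Y v
      linarith only [h2, h3, hR₁'0]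
  clear_value R₁'
  set A := |Hs + c/4| with hAdef
  have hA0 : 0 ≤ A := by rw [hAdef]; exact abs_nonneg _
  have hA1' : -A ≤ Hs + c/4 := by rw [hAdef]; exact neg_abs_le _
  have hA2' : Hs + c/4 ≤ A := by rw [hAdef]; exact le_abs_self _
  clear_value A
  set σ : ℝ := min (1/2) (min (r / (2*‖px‖+1)) (min ((c/4)/(1+R₁')) ((c/4)/(A+1)))) with hσdef
  have hpx0 : (0:ℝ) < 2*‖px‖+1 := by positivity
  have hσ0 : 0 < σ := by
    refine lt_min (by norm_num) (lt_min (div_pos hr0 hpx0) (lt_min ?_ ?_))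
    · exact div_pos (div_pos hcpos (by norm_num)) (add_pos_of_pos_of_nonneg one_pos hR₁'0)
    · exact div_pos (div_pos hcpos (by norm_num)) (add_pos_of_nonneg_of_pos hA0 one_pos)
  have hσhalf : σ ≤ 1/2 := min_le_left _ _
  have hσ17 : (0:ℝ) < 1 - σ := by linarith only [hσhalf]
  have hσ1 : 2*σ*‖px‖ ≤ r := by
    have h1 : σ ≤ r / (2*‖px‖+1) := (min_le_right _ _).trans (min_le_left _ _)
    have h2 : σ * (2*‖px‖+1) ≤ r := (le_div_iff₀ hpx0).mp h1
    linarith only [h2, hσ0]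
  have hσ2 : σ*(1+R₁') ≤ c/4 := by
    have h1 : σ ≤ (c/4)/(1+R₁') :=
      ((min_le_right _ _).trans (min_le_right _ _)).trans (min_le_left _ _)
    exact (le_div_iff₀ (by linarith only [hR₁'0])).mp h1
  have hσ3 : σ*A ≤ c/4 := by
    have h1 : σ ≤ (c/4)/(A+1) :=
      ((min_le_right _ _).trans (min_le_right _ _)).trans (min_le_right _ _)
    have h2 : σ * (A+1) ≤ c/4 := (le_div_iff₀ (by linarith only [hA0])).mp h1
    linarith only [h2, hσ0]
  clear_value σ
  simp only [subdifferentialP, Set.mem_setOf_eq] at hmem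
  have hev : ∀ᶠ z : ℝ × EuclideanSpace ℝ (Fin n) in nhdsWithin (t, x) {(t, x)}ᶜ,
      ((-σ : ℝ) : EReal) < ((‖z - (t, x)‖⁻¹ : ℝ) : EReal) *
        ((bolzaValue L φ z.1 z.2 : EReal) - (bolzaValue L φ t x : EReal) -
          ((pt * (z.1 - t) + ⟪px, z.2 - x⟫ : ℝ) : EReal)) := by
    refine eventually_lt_of_lt_liminf (lt_of_lt_of_le ?_ hmem)
    exact_mod_cast (show ((-σ : ℝ) : EReal) < ((0:ℝ) : EReal) by
      rw [EReal.coe_lt_coe_iff]; linarith only [hσ0])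
  rw [eventually_nhdsWithin_iff, Metric.eventually_nhds_iff] at hev
  obtain ⟨ρ, hρ0, hball⟩ := hev
  have hVpne : bolzaValue L φ t x ≠ ⊤ := bolzaValue_ne_top L hLcont φ hφ t ht x
  set Vp := bolzaValue L φ t x with hVpdef
  set VpT := Vp.toReal with hVpTdef
  have hVpT0 : 0 ≤ VpT := by rw [hVpTdef]; exact ENNReal.toReal_nonneg
  clear_value VpT
  set C := VpT + 1 with hCdef
  have hC0 : 0 < C := by rw [hCdef]; linarith only [hVpT0]
  clear_value C
  set r' := min r (ρ/2) with hr'def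
  have hr'0 : 0 < r' := lt_min hr0 (by linarith only [hρ0])
  have hr'r : r' ≤ r := min_le_left _ _
  have hr'ρ : r' ≤ ρ/2 := min_le_right _ _
  clear_value r'
  set M₀ : ℝ := 2*C/r' + 1 with hM₀def
  have hM₀0 : 0 < M₀ := by
    have hq : 0 < 2*C/r' := div_pos (by linarith only [hC0]) hr'0
    rw [hM₀def]
    linarith only [hq]
  clear_value M₀
  obtain ⟨R₀, hR₀⟩ := hΘsuper M₀
  set R₀' := max R₀ 0 with hR₀'def
  have hR₀'0 : 0 ≤ R₀' := le_max_right _ _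
  have hptw0 : ∀ Y v : EuclideanSpace ℝ (Fin n), ‖v‖ ≤ R₀' + M₀⁻¹ * L Y v := by
    intro Y v
    have hLnn : 0 ≤ M₀⁻¹ * L Y v := mul_nonneg (inv_nonneg.mpr hM₀0.le) (hL0 Y v)
    rcases le_or_gt ‖v‖ R₀' with hv | hv
    · linarith only [hLnn, hv]
    · have h1 : R₀ ≤ ‖v‖ := (le_max_left _ _).trans hv.le
      have h2 := (hR₀ v h1).trans (hcoerc Y v)
      have h3 : ‖v‖ ≤ M₀⁻¹ * L Y v := by
        rw [le_inv_mul_iff₀ hM₀0]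
        linarith only [h2]
      linarith only [h3, hR₀'0]
  clear_value R₀'
  set h : ℝ := min (t/2) (min (c/8) (min 1 (min (r'/(2*(R₀'+1))) (ρ/2)))) with hhdef
  have hh0 : 0 < h := by
    refine lt_min (by linarith only [ht]) (lt_min (div_pos hcpos (by norm_num))
      (lt_min one_pos (lt_min ?_ (half_pos hρ0))))
    exact div_pos hr'0 (by linarith only [hR₀'0])
  have hht : h < t := by
    have h1 : h ≤ t/2 := min_le_left _ _
    linarith only [h1, ht]
  have hhc8 : h ≤ c/8 := (min_le_right _ _).trans (min_le_left _ _)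
  have hh1 : h ≤ 1 := ((min_le_right _ _).trans (min_le_right _ _)).trans (min_le_left _ _)
  have hhr' : h ≤ r'/(2*(R₀'+1)) :=
    (((min_le_right _ _).trans (min_le_right _ _)).trans (min_le_right _ _)).trans (min_le_left _ _)
  have hhρ : h ≤ ρ/2 :=
    (((min_le_right _ _).trans (min_le_right _ _)).trans (min_le_right _ _)).trans (min_le_right _ _)
  clear_value h
  have hεpos : (0:ℝ≥0∞) < ENNReal.ofReal (h^2) := ENNReal.ofReal_pos.mpr (pow_pos hh0 2)
  obtain ⟨y, y', H1, H2, H3, Hcost⟩ := bolzaValue_lt L φ t x (Vp + ENNReal.ofReal (h^2))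
    (ENNReal.lt_add_right hVpne hεpos.ne')
  have huIcc : ∀ a b : ℝ, 0 ≤ a → a ≤ b → b ≤ t → uIcc a b ⊆ uIcc 0 t := by
    intro a b ha hab hbt
    rw [uIcc_of_le hab, uIcc_of_le (ha.trans (hab.trans hbt))]
    exact Icc_subset_Icc ha hbt
  have hII : ∀ a b : ℝ, 0 ≤ a → a ≤ b → b ≤ t →
      IntervalIntegrable (fun s => L (y s) (y' s)) volume a b :=
    fun a b ha hab hbt => H3.mono_set (huIcc a b ha hab hbt)
  have hIIv : ∀ a b : ℝ, 0 ≤ a → a ≤ b → b ≤ t → IntervalIntegrable y' volume a b :=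
    fun a b ha hab hbt => H1.mono_set (huIcc a b ha hab hbt)
  set J := ∫ s in (0:ℝ)..t, L (y s) (y' s) with hJdef
  have hJnn : 0 ≤ J := intervalIntegral.integral_nonneg ht.le (fun s _ => hL0 _ _)
  have hΦne : φ (y t) ≠ ⊤ := by
    intro hTop
    rw [hTop, add_top] at Hcost
    exact not_top_lt Hcost
  have hcostR : J + (φ (y t)).toReal < VpT + h^2 := by
    have h1 := (ENNReal.toReal_lt_toReal (by simp [ENNReal.add_eq_top, hΦne])
      (by simp [ENNReal.add_eq_top, hVpne])).mpr Hcost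
    rwa [ENNReal.toReal_add ENNReal.ofReal_ne_top hΦne,
      ENNReal.toReal_add hVpne ENNReal.ofReal_ne_top,
      ENNReal.toReal_ofReal hJnn, ENNReal.toReal_ofReal (sq_nonneg h), ← hVpTdef] at h1
  have hJC : J ≤ C := by
    have h1 := ENNReal.toReal_nonneg (a := φ (y t))
    have hh2 : h^2 ≤ 1 := pow_le_one₀ hh0.le hh1
    rw [hCdef]
    linarith only [hcostR, hh2, h1]
  have hsplit : (∫ s in (0:ℝ)..h, L (y s) (y' s)) + (∫ s in h..t, L (y s) (y' s)) = J :=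
    intervalIntegral.integral_add_adjacent_intervals
      (hII 0 h le_rfl hh0.le hht.le) (hII h t hh0.le hht.le le_rfl)
  clear_value J
  set G := ∫ s in (0:ℝ)..h, L (y s) (y' s) with hGdef
  set Q := ∫ s in h..t, L (y s) (y' s) with hQdef
  have hGnn : 0 ≤ G := intervalIntegral.integral_nonneg hh0.le (fun s _ => hL0 _ _)
  have hQnn : 0 ≤ Q := intervalIntegral.integral_nonneg hht.le (fun s _ => hL0 _ _)
  have hIntLe : ∀ s : ℝ, 0 ≤ s → s ≤ t → (∫ τ in (0:ℝ)..s, L (y τ) (y' τ)) ≤ J := by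
    intro s h0 hst
    have hs := intervalIntegral.integral_add_adjacent_intervals
      (hII 0 s le_rfl h0 hst) (hII s t h0 hst le_rfl)
    have hnn : 0 ≤ ∫ τ in s..t, L (y τ) (y' τ) :=
      intervalIntegral.integral_nonneg hst (fun τ _ => hL0 _ _)
    rw [← hJdef] at hs
    linarith only [hs, hnn]
  have hyint : ∀ s : ℝ, 0 ≤ s → s ≤ h → y s - x = ∫ τ in (0:ℝ)..s, y' τ := by
    intro s h0 hsh
    rw [H2 s ⟨h0, hsh.trans hht.le⟩]
    abel
  have hnorm_le : ∀ s : ℝ, 0 ≤ s → s ≤ h → ∀ Rc M : ℝ, 0 ≤ Rc → 0 ≤ M →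
      (∀ Y v, ‖v‖ ≤ Rc + M * L Y v) →
      ‖y s - x‖ ≤ s * Rc + M * (∫ τ in (0:ℝ)..s, L (y τ) (y' τ)) := by
    intro s h0 hsh Rc M hRc hM hptw
    rw [hyint s h0 hsh]
    have hst : s ≤ t := hsh.trans hht.le
    calc ‖∫ τ in (0:ℝ)..s, y' τ‖ ≤ ∫ τ in (0:ℝ)..s, ‖y' τ‖ :=
          intervalIntegral.norm_integral_le_integral_norm h0
      _ ≤ ∫ τ in (0:ℝ)..s, (Rc + M * L (y τ) (y' τ)) := by
          apply intervalIntegral.integral_mono_on h0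
            (hIIv 0 s le_rfl h0 hst).norm
            (intervalIntegrable_const.add ((hII 0 s le_rfl h0 hst).const_mul M))
          intro τ _
          exact hptw (y τ) (y' τ)
      _ = s * Rc + M * ∫ τ in (0:ℝ)..s, L (y τ) (y' τ) := by
          rw [intervalIntegral.integral_add intervalIntegrable_const
            ((hII 0 s le_rfl h0 hst).const_mul M),
            intervalIntegral.integral_const, intervalIntegral.integral_const_mul]
          simp [smul_eq_mul]
  have hreach : ∀ s : ℝ, 0 ≤ s → s ≤ h → ‖y s - x‖ ≤ r' := by
    intro s h0 hsh
    have h1 := hnorm_le s h0 hsh R₀' M₀⁻¹ hR₀'0 (inv_nonneg.mpr hM₀0.le) hptw0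
    have h2 : (∫ τ in (0:ℝ)..s, L (y τ) (y' τ)) ≤ J := hIntLe s h0 (hsh.trans hht.le)
    have h3 : s * R₀' ≤ h * R₀' := mul_le_mul_of_nonneg_right hsh hR₀'0
    have h4 : M₀⁻¹ * (∫ τ in (0:ℝ)..s, L (y τ) (y' τ)) ≤ M₀⁻¹ * C :=
      mul_le_mul_of_nonneg_left (h2.trans hJC) (inv_nonneg.mpr hM₀0.le)
    have h5 : h * R₀' ≤ r'/2 := by
      have h6 : h * (2*(R₀'+1)) ≤ r' := (le_div_iff₀ (by linarith only [hR₀'0])).mp hhr'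
      linarith only [h6, hh0.le]
    have h7 : M₀⁻¹ * C ≤ r'/2 := by
      rw [inv_mul_le_iff₀ hM₀0]
      have e : M₀ * (r'/2) = C + r'/2 := by
        rw [hM₀def]
        field_simp
      linarith only [e, hr'0]
    linarith only [h1, h3, h4, h5, h7]
  have hz₀ne : ((t - h, y h) : ℝ × EuclideanSpace ℝ (Fin n)) ≠ (t, x) := by
    intro he
    have h1 : t - h = t := congrArg Prod.fst he
    linarith only [h1, hh0]
  have hyhx : ‖y h - x‖ ≤ r' := hreach h hh0.le le_rfl
  have hdistz : dist ((t - h, y h) : ℝ × EuclideanSpace ℝ (Fin n)) (t, x) < ρ := by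
    rw [Prod.dist_eq]
    apply max_lt
    · rw [Real.dist_eq, show t - h - t = -h by ring, abs_neg, abs_of_nonneg hh0.le]
      linarith only [hhρ, hρ0]
    · rw [dist_eq_norm]
      linarith only [hyhx, hr'ρ, hρ0]
  have hkey := hball hdistz (by simpa using hz₀ne)
  have htail : bolzaValue L φ (t - h) (y h) ≤ ENNReal.ofReal Q + φ (y t) :=
    bolzaValue_tail L φ t h x hh0.le hht.le y y' H1 H2 H3
  set Vz := bolzaValue L φ (t - h) (y h) with hVzdef
  have hVzne : Vz ≠ ⊤ := ne_top_of_le_ne_top (by simp [ENNReal.add_eq_top, hΦne]) htail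
  set VzT := Vz.toReal with hVzTdef
  have hVzT : VzT ≤ Q + (φ (y t)).toReal := by
    have h1 := ENNReal.toReal_mono (by simp [ENNReal.add_eq_top, hΦne]) htail
    rw [ENNReal.toReal_add ENNReal.ofReal_ne_top hΦne, ENNReal.toReal_ofReal hQnn] at h1
    rw [hVzTdef]
    exact h1
  clear_value G Q VzT
  have eVz : ((Vz : ℝ≥0∞) : EReal) = ((VzT : ℝ) : EReal) := by
    rw [hVzTdef, ← EReal.toReal_coe_ennreal (x := Vz),
      EReal.coe_toReal (by simpa using hVzne) (by simp)]
  have eVp : ((Vp : ℝ≥0∞) : EReal) = ((VpT : ℝ) : EReal) := by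
    rw [hVpTdef, ← EReal.toReal_coe_ennreal (x := Vp),
      EReal.coe_toReal (by simpa using hVpne) (by simp)]
  set D := ‖((t - h, y h) : ℝ × EuclideanSpace ℝ (Fin n)) - (t, x)‖ with hDdef
  set lin := pt * ((t - h) - t) + ⟪px, y h - x⟫ with hlindef
  have hkeyR : -σ < D⁻¹ * (VzT - VpT - lin) := by
    have h1 : ((-σ : ℝ) : EReal) < ((D⁻¹ * (VzT - VpT - lin) : ℝ) : EReal) := by
      rw [EReal.coe_mul, EReal.coe_sub, EReal.coe_sub]
      rw [← eVz, ← eVp]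
      exact hkey
    exact EReal.coe_lt_coe_iff.mp h1
  have hDeq : D = ‖((t - h, y h) : ℝ × EuclideanSpace ℝ (Fin n)) - (t, x)‖ := hDdef
  have hlineq : lin = pt * ((t - h) - t) + ⟪px, y h - x⟫ := hlindef
  clear_value D lin
  have hDpos : 0 < D := by
    rw [hDeq, norm_pos_iff]
    exact sub_ne_zero_of_ne hz₀ne
  have hXgt : -σ * D < VzT - VpT - lin := by
    have h1 := mul_lt_mul_of_pos_right hkeyR hDpos
    rwa [mul_comm D⁻¹ _, mul_assoc, inv_mul_cancel₀ hDpos.ne', mul_one] at h1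
  have hDle : D ≤ h + h * R₁' + G := by
    have hyh1 : ‖y h - x‖ ≤ h * R₁' + G := by
      have h1 := hnorm_le h hh0.le le_rfl R₁' 1 hR₁'0 zero_le_one
        (fun Y v => by simpa using hptw1 Y v)
      rw [← hGdef] at h1
      linarith only [h1]
    have hzz : ((t - h, y h) : ℝ × EuclideanSpace ℝ (Fin n)) - (t, x) = (-h, y h - x) := by
      rw [Prod.mk_sub_mk]
      congr 1
      ring
    rw [hDeq, hzz, Prod.norm_def]
    apply max_le
    · simp only [Real.norm_eq_abs, abs_neg, abs_of_nonneg hh0.le]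
      have hm : 0 ≤ h * R₁' := mul_nonneg hh0.le hR₁'0
      linarith only [hm, hGnn]
    · simp only
      linarith only [hyh1, hh0.le]
  have hIIinner : IntervalIntegrable (fun s => ⟪px, y' s⟫) volume 0 h := by
    have h1 := hIIv 0 h le_rfl hh0.le hht.le
    rw [intervalIntegrable_iff] at h1 ⊢
    exact (innerSL ℝ px).integrable_comp h1
  have hinner : ⟪px, y h - x⟫ = ∫ s in (0:ℝ)..h, ⟪px, y' s⟫ := by
    rw [hyint h hh0.le le_rfl]
    exact ((innerSL ℝ px).intervalIntegral_comp_comm (hIIv 0 h le_rfl hh0.le hht.le)).symm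
  have hcore : σ * G - (1-σ)*(Hs + c/4)*h ≤ G + ∫ s in (0:ℝ)..h, ⟪px, y' s⟫ := by
    have hmono : ∫ s in (0:ℝ)..h, (σ * L (y s) (y' s) - (1-σ)*(Hs + c/4)) ≤
        ∫ s in (0:ℝ)..h, (L (y s) (y' s) + ⟪px, y' s⟫) := by
      apply intervalIntegral.integral_mono_on hh0.le
        (((hII 0 h le_rfl hh0.le hht.le).const_mul σ).sub intervalIntegrable_const)
        ((hII 0 h le_rfl hh0.le hht.le).add hIIinner)
      intro s hs
      set q' : EuclideanSpace ℝ (Fin n) := (1-σ)⁻¹ • (-px) with hq'def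
      clear_value q'
      have hq'r : ‖q' - (-px)‖ ≤ r := by
        have he : q' - (-px) = ((1-σ)⁻¹ - 1) • (-px) := by
          rw [hq'def, sub_smul, one_smul]
        rw [he, norm_smul, Real.norm_eq_abs, norm_neg]
        have e1 : (1-σ)⁻¹ - 1 = σ/(1-σ) := by field_simp; ring
        have e2 : σ/(1-σ) ≤ 2*σ := by
          rw [div_le_iff₀ hσ17]
          have hm : 0 ≤ σ * (1 - 2*σ) :=
            mul_nonneg hσ0.le (by linarith only [hσhalf])
          linarith only [hm]
        have e3 : 0 ≤ σ/(1-σ) := div_nonneg hσ0.le hσ17.le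
        rw [e1, abs_of_nonneg e3]
        have hm2 : σ/(1-σ) * ‖px‖ ≤ 2*σ * ‖px‖ :=
          mul_le_mul_of_nonneg_right e2 (norm_nonneg px)
        linarith only [hm2, hσ1]
      have hyr : ‖y s - x‖ ≤ r := (hreach s hs.1 hs.2).trans hr'r
      have hH := hHr (y s) q' hyr hq'r
      have hle := (le_hamiltonian hL0 hΘsuper hcoerc (y s) q' (y' s)).trans hH
      have hsmul : (1-σ) * ⟪q', y' s⟫ = ⟪-px, y' s⟫ := by
        rw [hq'def, real_inner_smul_left, ← mul_assoc, mul_inv_cancel₀ hσ17.ne', one_mul]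
      have hinneg : ⟪-px, y' s⟫ = -⟪px, y' s⟫ := inner_neg_left px (y' s)
      have hmul := mul_le_mul_of_nonneg_left hle hσ17.le
      linarith only [hmul, hsmul, hinneg]
    have hLHS : ∫ s in (0:ℝ)..h, (σ * L (y s) (y' s) - (1-σ)*(Hs + c/4)) =
        σ * G - (1-σ)*(Hs + c/4)*h := by
      rw [intervalIntegral.integral_sub ((hII 0 h le_rfl hh0.le hht.le).const_mul σ)
        intervalIntegrable_const,
        intervalIntegral.integral_const_mul, intervalIntegral.integral_const]
      rw [← hGdef]
      simp [smul_eq_mul]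
      ring
    have hRHS : ∫ s in (0:ℝ)..h, (L (y s) (y' s) + ⟪px, y' s⟫) =
        G + ∫ s in (0:ℝ)..h, ⟪px, y' s⟫ := by
      rw [intervalIntegral.integral_add (hII 0 h le_rfl hh0.le hht.le) hIIinner, ← hGdef]
    rw [hLHS, hRHS] at hmono
    exact hmono
  have hQVz : VzT < VpT + h^2 - G := by linarith only [hVzT, hcostR, hsplit]
  have hmain : -σ * (h + h * R₁' + G) < h^2 + pt*h - σ*G + (1-σ)*(Hs + c/4)*h := by
    have h1 : -σ * (h + h * R₁' + G) ≤ -σ * D := by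
      have hm := mul_le_mul_of_nonneg_left hDle hσ0.le
      linarith only [hm]
    have h2 : lin = -(pt*h) + ⟪px, y h - x⟫ := by rw [hlineq]; ring_nf
    have h3 : ⟪px, y h - x⟫ ≥ σ * G - (1-σ)*(Hs + c/4)*h - G := by
      rw [hinner]; linarith only [hcore]
    calc -σ * (h + h * R₁' + G) ≤ -σ * D := h1
      _ < VzT - VpT - lin := hXgt
      _ ≤ (VpT + h^2 - G) - VpT - lin := by linarith only [hQVz]
      _ = h^2 - G + pt*h - ⟪px, y h - x⟫ := by rw [h2]; ring
      _ ≤ h^2 - G + pt*h - (σ * G - (1-σ)*(Hs + c/4)*h - G) := by linarith only [h3]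
      _ = h^2 + pt*h - σ*G + (1-σ)*(Hs + c/4)*h := by ring
  have e1 : -(c/4)*h ≤ -σ*(1+R₁')*h := by
    have hm := mul_le_mul_of_nonneg_right hσ2 hh0.le
    linarith only [hm]
  have e2 : (1-σ)*(Hs + c/4) ≤ -pt - c/2 := by
    have h4 : -(σ*(Hs + c/4)) ≤ σ*A := by
      have hm := mul_le_mul_of_nonneg_left hA1' hσ0.le
      linarith only [hm]
    have h5 : Hs + c/4 = -pt - c + c/4 := by rw [hcdef]; ring
    linarith only [h4, hσ3, h5]
  have e3 : (1-σ)*(Hs + c/4)*h ≤ (-pt - c/2)*h :=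
    mul_le_mul_of_nonneg_right e2 hh0.le
  have p1 : h * h ≤ (c/8) * h := mul_le_mul_of_nonneg_right hhc8 hh0.le
  have p2 : 0 < (c/8) * h := mul_pos (div_pos hcpos (by norm_num)) hh0
  have hsq : h^2 = h * h := sq h
  linarith only [hmain, e1, e3, p1, p2, hsq]
end
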